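/- arXiv:1512.08141 — 7 statements merged into one kernel-verified Lean document; each statement's English description precedes it below -/
import Mathlib

section
/- Let n ≥ 2 and let i be an integer with 1 ≤ i ≤ ⌊n/2⌋, and let G = C_n(1, ..., î, ..., ⌊n/2⌋) be the circulant graph whose generating set is {1, 2, ..., ⌊n/2⌋} \ {i}. Then G satisfies Serre's condition S_2 if and only if gcd(i, n) = 1. -/
/-- The circulant graph `C_n(S)` on vertex set `ZMod n`: `i` and `j` are adjacent
iff `i ≠ j` and `|i-j| ∈ S` or `n - |i-j| ∈ S` (encoded via `ZMod` subtraction). -/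
def circulantGraph (n : ℕ) (S : Set ℕ) : SimpleGraph (ZMod n) where
  Adj i j := i ≠ j ∧ ((i - j).val ∈ S ∨ (j - i).val ∈ S)
  symm := ⟨fun i j h => ⟨h.1.symm, h.2.symm⟩⟩
  loopless := ⟨fun i h => h.1 rfl⟩

/-- An (abstract) simplicial complex on vertex type `V`, as a downward closed
family of finite subsets of `V`. -/
def IsComplex {V : Type*} (Δ : Set (Finset V)) : Prop :=
  ∀ F ∈ Δ, ∀ G ⊆ F, G ∈ Δ

/-- The link of a face `F` in the complex `Δ`. -/
def linkC {V : Type*} [DecidableEq V] (Δ : Set (Finset V)) (F : Finset V) : Set (Finset V) :=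
  {G | Disjoint G F ∧ G ∪ F ∈ Δ}

/-- A complex is connected if any two of its vertices can be joined by a path
of 1-dimensional faces. -/
def ComplexConnected {V : Type*} [DecidableEq V] (Δ : Set (Finset V)) : Prop :=
  ∀ u, ({u} : Finset V) ∈ Δ → ∀ w, ({w} : Finset V) ∈ Δ →
    Relation.ReflTransGen (fun a b => a ≠ b ∧ ({a, b} : Finset V) ∈ Δ) u w

/-- Serre's condition `S₂` for a simplicial complex: the link of every face of the
complex whose link has dimension at least `1` is connected. -/
def IsS2 {V : Type*} [DecidableEq V] (Δ : Set (Finset V)) : Prop :=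
  ∀ F ∈ Δ, (∃ G ∈ linkC Δ F, 2 ≤ G.card) → ComplexConnected (linkC Δ F)

/-- The independence complex of a graph: faces are the (finite) independent sets. -/
def IndComplex {V : Type*} (G : SimpleGraph V) : Set (Finset V) :=
  {F | ∀ u ∈ F, ∀ v ∈ F, ¬ G.Adj u v}

/-- A graph is `S₂` if its independence complex is `S₂`. -/
def GraphS2 {V : Type*} [DecidableEq V] (G : SimpleGraph V) : Prop :=
  IsS2 (IndComplex G)

/-- The facets (maximal faces) of a complex. -/
def facetsOf {V : Type*} (Δ : Set (Finset V)) : Set (Finset V) :=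
  {F | F ∈ Δ ∧ ∀ G ∈ Δ, F ⊆ G → F = G}

/-- A graph is well-covered if all its maximal independent sets have the same cardinality. -/
def WellCovered {V : Type*} (G : SimpleGraph V) : Prop :=
  ∀ A ∈ facetsOf (IndComplex G), ∀ B ∈ facetsOf (IndComplex G), A.card = B.card

/-- A complex is pure if all its facets have the same cardinality. -/
def IsPure {V : Type*} (Δ : Set (Finset V)) : Prop :=
  ∀ F ∈ facetsOf Δ, ∀ G ∈ facetsOf Δ, F.card = G.card

/-- `L` is a shelling order of `Δ`: a linear order `F₁, …, Fₛ` of all the facets of `Δ`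
such that for all `i < j` there are `v ∈ Fⱼ \ Fᵢ` and `l < j` with `Fⱼ \ F_l = {v}`. -/
def IsShellingOrder {V : Type*} [DecidableEq V] (Δ : Set (Finset V)) (L : List (Finset V)) : Prop :=
  L.Nodup ∧ (∀ F, F ∈ facetsOf Δ ↔ F ∈ L) ∧
    ∀ i j : Fin L.length, i < j →
      ∃ v ∈ L.get j \ L.get i, ∃ l : Fin L.length, l < j ∧ L.get j \ L.get l = {v}

/-- A complex is shellable if its facets admit a shelling order. -/
def IsShellable {V : Type*} [DecidableEq V] (Δ : Set (Finset V)) : Prop :=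
  ∃ L : List (Finset V), IsShellingOrder Δ L

/-- A pure complex is strongly connected if any two facets are joined by a sequence of
facets in which consecutive facets intersect in one element fewer than their cardinality. -/
def StronglyConnectedComplex {V : Type*} [DecidableEq V] (Δ : Set (Finset V)) : Prop :=
  ∀ F ∈ facetsOf Δ, ∀ F' ∈ facetsOf Δ,
    Relation.ReflTransGen
      (fun A B => A ∈ facetsOf Δ ∧ B ∈ facetsOf Δ ∧ (A ∩ B).card = A.card - 1) F F'

/-- The join of two simplicial complexes (on disjoint vertex sets). -/
def joinC {V : Type*} [DecidableEq V] (Δ₁ Δ₂ : Set (Finset V)) : Set (Finset V) :=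
  {F | ∃ F₁ ∈ Δ₁, ∃ F₂ ∈ Δ₂, F = F₁ ∪ F₂}

/-- The generating set of the one-paired circulant graph `C(n; a, b)`. -/
def onePairedSet (n a b : ℕ) : Set ℕ :=
  {d | 1 ≤ d ∧ d ≤ n / 2 ∧ a ∣ d ∧ ¬ (a * b ∣ d)}

private lemma not_adj_iff {n i : ℕ} (hn : 2 ≤ n) (hi1 : 1 ≤ i) (hi2 : i ≤ n / 2)
    (u v : ZMod n) :
    ¬ (circulantGraph n (Set.Icc 1 (n / 2) \ {i})).Adj u v ↔
      u - v = 0 ∨ u - v = (i : ZMod n) ∨ u - v = -(i : ZMod n) := by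
  haveI : NeZero n := ⟨by omega⟩
  have hin : i < n := by omega
  have helper : ∀ w : ZMod n, (w = (i : ZMod n) ↔ w.val = i) := by
    intro w
    constructor
    · intro h; rw [h]; exact ZMod.val_natCast_of_lt hin
    · intro h; rw [← h]; exact (ZMod.natCast_rightInverse w).symm
  by_cases huv : u = v
  · subst huv
    simp [circulantGraph, sub_self]
  · have hz0 : u - v ≠ 0 := sub_ne_zero.mpr huv
    have hvlt : (u - v).val < n := ZMod.val_lt _
    have hv0 : (u - v).val ≠ 0 := fun h => hz0 ((ZMod.val_eq_zero _).mp h)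
    have hbval : (v - u).val = n - (u - v).val := by
      rw [show v - u = -(u - v) by ring, ZMod.neg_val, if_neg hz0]
    have e1 : u - v = (i : ZMod n) ↔ (u - v).val = i := helper _
    have e2 : u - v = -(i : ZMod n) ↔ (v - u).val = i := by
      rw [show v - u = -(u - v) by ring, ← helper]
      constructor
      · intro h; rw [h, neg_neg]
      · intro h; rw [← h, neg_neg]
    rw [e1, e2]
    show ¬(u ≠ v ∧ ((u - v).val ∈ Set.Icc 1 (n/2) \ {i} ∨ (v - u).val ∈ Set.Icc 1 (n/2) \ {i})) ↔ _
    simp only [Set.mem_diff, Set.mem_Icc, Set.mem_singleton_iff, ne_eq, huv,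
      not_false_eq_true, true_and, sub_eq_zero]
    generalize (u - v).val = a at *
    generalize (v - u).val = b at *
    constructor
    · intro h
      rcases Nat.lt_or_ge a i with h'|h'
      · right; left; omega
      · rcases Nat.eq_or_lt_of_le h' with h''|h''
        · right; left; omega
        · right; right; omega
    · intro h h'
      rcases h with h|h|h
      · exact h.elim
      · omega
      · omega

/-- For `n ≥ 2` and `1 ≤ i ≤ ⌊n/2⌋`, the circulant graph `C_n(1,…,î,…,⌊n/2⌋)`
(generating set `{1,…,⌊n/2⌋} \ {i}`) is `S₂` iff `gcd(i, n) = 1`. -/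
theorem circulant_omit_S2_iff (n i : ℕ) (hn : 2 ≤ n) (hi1 : 1 ≤ i) (hi2 : i ≤ n / 2) :
    GraphS2 (circulantGraph n (Set.Icc 1 (n / 2) \ {i})) ↔ Nat.gcd i n = 1 := by
  haveI : NeZero n := ⟨by omega⟩
  set z : ZMod n := (i : ZMod n) with hzdef
  set Δ : Set (Finset (ZMod n)) :=
    IndComplex (circulantGraph n (Set.Icc 1 (n / 2) \ {i})) with hΔdef
  have hzne : z ≠ 0 := by
    intro h
    have := (ZMod.natCast_eq_zero_iff i n).mp h
    have := Nat.le_of_dvd (by omega) this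
    omega
  have faceIff : ∀ F : Finset (ZMod n),
      F ∈ Δ ↔ ∀ u ∈ F, ∀ v ∈ F, (u - v = 0 ∨ u - v = z ∨ u - v = -z) := by
    intro F
    exact forall₂_congr fun u _ => forall₂_congr fun v _ => not_adj_iff hn hi1 hi2 u v
  have singFace : ∀ a : ZMod n, ({a} : Finset (ZMod n)) ∈ Δ := by
    intro a
    rw [faceIff]
    intro u hu v hv
    simp only [Finset.mem_singleton] at hu hv
    subst hu; subst hv
    left; ring
  have pairFace : ∀ a : ZMod n, ({a, a + z} : Finset (ZMod n)) ∈ Δ := by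
    intro a
    rw [faceIff]
    intro u hu v hv
    simp only [Finset.mem_insert, Finset.mem_singleton] at hu hv
    rcases hu with rfl | rfl <;> rcases hv with rfl | rfl
    · left; ring
    · right; right; ring
    · right; left; ring
    · left; ring
  have linkEmpty : linkC Δ ∅ = Δ := by
    ext G
    simp [linkC]
  have three : ∀ F ∈ Δ, ∀ a ∈ F, ∀ b ∈ F, ∀ c ∈ F,
      a ≠ b → a ≠ c → b ≠ c → z + z + z = 0 := by
    intro F hF a ha b hb c hc hab hac hbc
    have h1 : b - a = z ∨ b - a = -z := by
      rcases (faceIff F).mp hF b hb a ha with h | h | h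
      · exact absurd (sub_eq_zero.mp h).symm hab
      · exact Or.inl h
      · exact Or.inr h
    have h2 : c - a = z ∨ c - a = -z := by
      rcases (faceIff F).mp hF c hc a ha with h | h | h
      · exact absurd (sub_eq_zero.mp h).symm hac
      · exact Or.inl h
      · exact Or.inr h
    have h3 : c - b = z ∨ c - b = -z := by
      rcases (faceIff F).mp hF c hc b hb with h | h | h
      · exact absurd (sub_eq_zero.mp h).symm hbc
      · exact Or.inl h
      · exact Or.inr h
    rcases h1 with h1 | h1 <;> rcases h2 with h2 | h2 <;> rcases h3 with h3 | h3 <;>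
      first
        | exact absurd (show z = 0 by linear_combination h2 - h1 - h3) hzne
        | exact absurd (show z = 0 by linear_combination h1 - h2 + h3) hzne
        | linear_combination h2 - h1 - h3
        | linear_combination h1 - h2 + h3
  have card3 : ∀ F ∈ Δ, F.card ≤ 3 := by
    intro F hF
    by_contra hcon
    push_neg at hcon
    have h2lt : 2 < F.card := by omega
    obtain ⟨a, b, c, ha, hb, hc, hab, hac, hbc⟩ := Finset.two_lt_card_iff.mp h2lt
    have h3 := three F hF a ha b hb c hc hab hac hbc
    have hsub : F ⊆ {a, a + z, a - z} := by
      intro t ht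
      rcases (faceIff F).mp hF t ht a ha with h | h | h
      · have ht1 : t = a := sub_eq_zero.mp h
        rw [ht1]
        exact Finset.mem_insert_self _ _
      · have ht1 : t = a + z := by linear_combination h
        rw [ht1]
        exact Finset.mem_insert_of_mem (Finset.mem_insert_self _ _)
      · have ht1 : t = a - z := by linear_combination h
        rw [ht1]
        exact Finset.mem_insert_of_mem (Finset.mem_insert_of_mem (Finset.mem_singleton_self _))
    have hle := Finset.card_le_card hsub
    have h31 : ({a, a + z, a - z} : Finset (ZMod n)).card ≤ 3 := by
      refine le_trans (Finset.card_insert_le _ _) ?_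
      have := Finset.card_insert_le (a + z) ({a - z} : Finset (ZMod n))
      simp only [Finset.card_singleton] at this
      omega
    omega
  have stepPath : ∀ (m : ℕ) (u : ZMod n),
      Relation.ReflTransGen (fun a b => a ≠ b ∧ ({a, b} : Finset (ZMod n)) ∈ Δ)
        u (u + m • z) := by
    intro m
    induction m with
    | zero =>
      intro u
      simpa using Relation.ReflTransGen.refl
    | succ k ih =>
      intro u
      have e : u + (k + 1) • z = (u + k • z) + z := by rw [succ_nsmul]; ring
      rw [e]
      refine (ih u).tail ⟨?_, pairFace (u + k • z)⟩
      intro h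
      exact hzne (left_eq_add.mp h)
  constructor
  · -- S2 → gcd = 1
    intro hS2
    have h0 : (∅ : Finset (ZMod n)) ∈ Δ := by
      rw [faceIff]; intro u hu; simp at hu
    have hex : ∃ G ∈ linkC Δ ∅, 2 ≤ G.card := by
      refine ⟨{0, z}, ?_, ?_⟩
      · rw [linkEmpty]
        simpa using pairFace 0
      · rw [Finset.card_pair hzne.symm]
    have hconn := hS2 ∅ h0 hex
    rw [linkEmpty] at hconn
    have hpath := hconn 0 (singFace 0) 1 (singFace 1)
    have key : ∀ a b : ZMod n,
        Relation.ReflTransGen (fun x y => x ≠ y ∧ ({x, y} : Finset (ZMod n)) ∈ Δ) a b →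
        b - a ∈ AddSubgroup.zmultiples z := by
      intro a b h
      induction h with
      | refl => simpa using (AddSubgroup.zmultiples z).zero_mem
      | @tail p q hs hr ih =>
        obtain ⟨hne, hface⟩ := hr
        have hd : q - p = z ∨ q - p = -z := by
          rcases (faceIff _).mp hface q (by simp) p (by simp) with h' | h' | h'
          · exact absurd (sub_eq_zero.mp h').symm hne
          · exact Or.inl h'
          · exact Or.inr h'
        have hqa : q - a = (q - p) + (p - a) := by ring
        rw [hqa]
        refine AddSubgroup.add_mem _ ?_ ih
        rcases hd with h' | h'
        · rw [h']; exact AddSubgroup.mem_zmultiples z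
        · rw [h']; exact AddSubgroup.neg_mem _ (AddSubgroup.mem_zmultiples z)
    have h1m := key 0 1 hpath
    rw [sub_zero] at h1m
    obtain ⟨k, hk⟩ := (AddSubgroup.mem_zmultiples_iff).mp h1m
    have hunit : IsUnit z := by
      refine IsUnit.of_mul_eq_one (a := z) (k : ZMod n) ?_
      rw [mul_comm, ← zsmul_eq_mul]
      exact hk
    exact (ZMod.isUnit_iff_coprime i n).mp hunit
  · -- gcd = 1 → S2
    intro hgcd
    have hunit : IsUnit z := (ZMod.isUnit_iff_coprime i n).mpr hgcd
    obtain ⟨y, hy⟩ := hunit.exists_right_inv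
    intro F hF hdim
    by_cases hFe : F = ∅
    · subst hFe
      rw [linkEmpty]
      intro u _ w _
      have hcast : ((((w - u) * y).val : ℕ) : ZMod n) = (w - u) * y :=
        ZMod.natCast_rightInverse _
      have keyw : w = u + (((w - u) * y).val) • z := by
        rw [nsmul_eq_mul, hcast]
        linear_combination (u - w) * hy
      rw [keyw]
      exact stepPath _ u
    · obtain ⟨G₂, hG₂l, hG₂c⟩ := hdim
      obtain ⟨hdisj, hunion⟩ := hG₂l
      have hFne : F.Nonempty := Finset.nonempty_iff_ne_empty.mpr hFe
      have hcards := Finset.card_union_of_disjoint hdisj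
      have hle3 := card3 _ hunion
      have hFc : F.card = 1 := by
        have := Finset.card_pos.mpr hFne
        omega
      obtain ⟨a, rfl⟩ := Finset.card_eq_one.mp hFc
      have hu3 : 2 < (G₂ ∪ {a}).card := by
        rw [hcards]
        simp only [Finset.card_singleton]
        omega
      obtain ⟨p, q, r, hp, hq, hr, hpq, hpr, hqr⟩ := Finset.two_lt_card_iff.mp hu3
      have h3 : z + z + z = 0 := three _ hunion p hp q hq r hr hpq hpr hqr
      intro u hu w hw
      obtain ⟨hud, huf⟩ := hu
      obtain ⟨hwd, hwf⟩ := hw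
      have hua : u ≠ a := by
        intro h; subst h
        simp [Finset.disjoint_singleton] at hud
      have hwa : w ≠ a := by
        intro h; subst h
        simp [Finset.disjoint_singleton] at hwd
      have hufa : ({u, a} : Finset (ZMod n)) ∈ Δ := by
        have he : ({u} : Finset (ZMod n)) ∪ {a} = {u, a} := by
          ext t; simp
        rwa [he] at huf
      have hwfa : ({w, a} : Finset (ZMod n)) ∈ Δ := by
        have he : ({w} : Finset (ZMod n)) ∪ {a} = {w, a} := by
          ext t; simp
        rwa [he] at hwf
      have eu : u - a = z ∨ u - a = -z := by
        rcases (faceIff _).mp hufa u (by simp) a (by simp) with h | h | h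
        · exact absurd (sub_eq_zero.mp h) hua
        · exact Or.inl h
        · exact Or.inr h
      have ew : w - a = z ∨ w - a = -z := by
        rcases (faceIff _).mp hwfa w (by simp) a (by simp) with h | h | h
        · exact absurd (sub_eq_zero.mp h) hwa
        · exact Or.inl h
        · exact Or.inr h
      by_cases huw : u = w
      · subst huw
        exact Relation.ReflTransGen.refl
      · have hd : u - w = z ∨ u - w = -z := by
          rcases eu with eu | eu <;> rcases ew with ew | ew
          · exact absurd (by linear_combination eu - ew) huw
          · right; linear_combination eu - ew + h3
          · left; linear_combination eu - ew - h3
          · exact absurd (by linear_combination eu - ew) huw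
        refine Relation.ReflTransGen.single ⟨huw, ?_, ?_⟩
        · rw [Finset.disjoint_singleton_right]
          simp only [Finset.mem_insert, Finset.mem_singleton, not_or]
          exact ⟨fun h => hua h.symm, fun h => hwa h.symm⟩
        · have hcv : ({u, w} : Finset (ZMod n)) ∪ {a} = {u, w, a} := by
            ext t; simp [or_assoc]
          rw [hcv, faceIff]
          intro x hx y hy
          simp only [Finset.mem_insert, Finset.mem_singleton] at hx hy
          rcases hx with rfl | rfl | rfl <;> rcases hy with rfl | rfl | rfl
          · left; ring
          · exact Or.inr hd
          · exact Or.inr eu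
          · rcases hd with h | h
            · right; right; linear_combination -h
            · right; left; linear_combination -h
          · left; ring
          · exact Or.inr ew
          · rcases eu with h | h
            · right; right; linear_combination -h
            · right; left; linear_combination -h
          · rcases ew with h | h
            · right; right; linear_combination -h
            · right; left; linear_combination -h
          · left; ring
end

section
/- Let a ≥ 1 and b ≥ 2 be integers and n a positive integer with ab | n, and let G = C(n; a, b) be the one-paired circulant graph. Then G satisfies Serre's condition S_2 if and only if n = ab. -/
lemma ind_down {V : Type*} (G : SimpleGraph V) {F F' : Finset V}
    (h : F ∈ IndComplex G) (hsub : F' ⊆ F) : F' ∈ IndComplex G :=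
  fun u hu v hv => h u (hsub hu) v (hsub hv)

lemma link_singleton {V : Type*} [DecidableEq V] {G : SimpleGraph V} {F S : Finset V}
    (hS : S ∈ linkC (IndComplex G) F) {x : V} (hx : x ∈ S) :
    ({x} : Finset V) ∈ linkC (IndComplex G) F :=
  ⟨Finset.disjoint_of_subset_left (Finset.singleton_subset_iff.2 hx) hS.1,
   ind_down G hS.2 (Finset.union_subset_union_left (Finset.singleton_subset_iff.2 hx))⟩

lemma dvd_val_sub_iff {N m : ℕ} [NeZero N] (h : m ∣ N) (x y : ZMod N) :
    m ∣ (x - y).val ↔ ZMod.castHom h (ZMod m) x = ZMod.castHom h (ZMod m) y := by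
  rw [← sub_eq_zero, ← map_sub, ZMod.castHom_apply, ← ZMod.natCast_val,
    ZMod.natCast_eq_zero_iff]

lemma onePaired_adj_iff {n a b : ℕ} (hn : 0 < n) (hab : a * b ∣ n) (i j : ZMod n) :
    (circulantGraph n (onePairedSet n a b)).Adj i j ↔
      i ≠ j ∧ a ∣ (i - j).val ∧ ¬ (a * b ∣ (i - j).val) := by
  haveI : NeZero n := ⟨hn.ne'⟩
  have han : a ∣ n := (dvd_mul_right a b).trans hab
  have hd_lt : (i - j).val < n := ZMod.val_lt _
  have hv : i ≠ j → (j - i).val = n - (i - j).val := by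
    intro hne
    have h1 : j - i = -(i - j) := by ring
    rw [h1, ZMod.neg_val, if_neg (sub_ne_zero.2 hne)]
  constructor
  · rintro ⟨hne, h | h⟩
    · exact ⟨hne, h.2.2.1, h.2.2.2⟩
    · rw [hv hne] at h
      obtain ⟨h1, h2, h3, h4⟩ := h
      refine ⟨hne, ?_, ?_⟩
      · have h5 := Nat.dvd_sub han h3
        rwa [Nat.sub_sub_self hd_lt.le] at h5
      · intro hc
        exact h4 (Nat.dvd_sub hab hc)
  · rintro ⟨hne, h3, h4⟩
    have hd_pos : 0 < (i - j).val := by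
      rcases Nat.eq_zero_or_pos (i - j).val with h | h
      · exact absurd (sub_eq_zero.1 ((ZMod.val_eq_zero _).1 h)) hne
      · exact h
    refine ⟨hne, ?_⟩
    by_cases hle : (i - j).val ≤ n / 2
    · exact Or.inl ⟨hd_pos, hle, h3, h4⟩
    · refine Or.inr ?_
      rw [hv hne]
      refine ⟨by omega, ?_, Nat.dvd_sub han h3, ?_⟩
      · have h2 := Nat.div_add_mod n 2
        have h2' : n % 2 < 2 := Nat.mod_lt _ (by norm_num)
        omega
      · intro hc
        have h5 := Nat.dvd_sub hab hc
        rw [Nat.sub_sub_self hd_lt.le] at h5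
        exact h4 h5

/-- The one-paired circulant graph `C(n; a, b)` (with `a ≥ 1`, `b ≥ 2`, `ab ∣ n`, `n > 0`)
is `S₂` iff `n = ab`. -/
theorem onePaired_S2_iff (n a b : ℕ) (ha : 1 ≤ a) (hb : 2 ≤ b) (hn : 0 < n)
    (hab : a * b ∣ n) :
    GraphS2 (circulantGraph n (onePairedSet n a b)) ↔ n = a * b := by
  haveI : NeZero n := ⟨hn.ne'⟩
  haveI : NeZero a := ⟨by omega⟩
  haveI : NeZero (a * b) := ⟨Nat.mul_ne_zero (by omega) (by omega)⟩
  have han : a ∣ n := (dvd_mul_right a b).trans hab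
  have haab : a ∣ a * b := dvd_mul_right a b
  set G := circulantGraph n (onePairedSet n a b) with hG
  set φ := ZMod.castHom hab (ZMod (a * b)) with hφdef
  set ψ := ZMod.castHom han (ZMod a) with hψdef
  set χ := ZMod.castHom haab (ZMod a) with hχdef
  have hψφ : ∀ x : ZMod n, ψ x = χ (φ x) :=
    fun x => (DFunLike.congr_fun (ZMod.castHom_comp haab hab) x).symm
  have hχval : ∀ y : ZMod (a * b), χ y = ((y.val : ℕ) : ZMod a) :=
    fun y => (ZMod.castHom_apply y).trans (ZMod.natCast_val y).symm
  have hadj : ∀ i j : ZMod n, G.Adj i j ↔ i ≠ j ∧ ψ i = ψ j ∧ φ i ≠ φ j := by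
    intro i j
    rw [hG, onePaired_adj_iff hn hab, dvd_val_sub_iff han, dvd_val_sub_iff hab,
      ← hψdef, ← hφdef]
  have hψ0iff : ∀ x : ZMod n, ψ x = 0 ↔ a ∣ (φ x).val := by
    intro x
    rw [hψφ, hχval, ZMod.natCast_eq_zero_iff]
  constructor
  · -- S₂ implies n = a*b
    intro hS2
    by_contra hnab
    have hablt : a * b < n := lt_of_le_of_ne (Nat.le_of_dvd hn hab) fun h => hnab h.symm
    have habpos : 0 < a * b := Nat.mul_pos (by omega) (by omega)
    have halt : a < a * b := (lt_mul_iff_one_lt_right (by omega : (0:ℕ) < a)).2 (by omega)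
    classical
    set F : Finset (ZMod n) :=
      Finset.univ.filter (fun x => 0 < (φ x).val ∧ (φ x).val < a) with hFdef
    have hmemF : ∀ x : ZMod n, x ∈ F ↔ 0 < (φ x).val ∧ (φ x).val < a := by
      intro x; rw [hFdef]; simp
    have hψFne : ∀ f ∈ F, ψ f ≠ 0 := by
      intro f hf h0
      rw [hmemF] at hf
      have h1 := Nat.le_of_dvd hf.1 ((hψ0iff f).1 h0)
      omega
    have hFind : F ∈ IndComplex G := by
      intro u hu v hv hadj'
      rw [hadj] at hadj'
      obtain ⟨hne', hψeq, hφne⟩ := hadj'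
      rw [hmemF] at hu hv
      apply hφne
      apply ZMod.val_injective
      have h1 : (((φ u).val : ℕ) : ZMod a) = (((φ v).val : ℕ) : ZMod a) := by
        rw [← hχval, ← hχval, ← hψφ, ← hψφ, hψeq]
      have h2 := congrArg ZMod.val h1
      rwa [ZMod.val_cast_of_lt hu.2, ZMod.val_cast_of_lt hv.2] at h2
    have hvert : ∀ x : ZMod n,
        ({x} : Finset (ZMod n)) ∈ linkC (IndComplex G) F → ψ x = 0 := by
      intro x hx
      by_contra hψx
      have hxF : x ∉ F := Finset.disjoint_singleton_left.1 hx.1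
      have hc_pos : 0 < (ψ x).val := by
        rcases Nat.eq_zero_or_pos (ψ x).val with h | h
        · exact absurd ((ZMod.val_eq_zero _).1 h) hψx
        · exact h
      have hc_lt : (ψ x).val < a := ZMod.val_lt _
      have hφg : φ (((ψ x).val : ℕ) : ZMod n) = (((ψ x).val : ℕ) : ZMod (a * b)) :=
        map_natCast φ _
      have hφgval : (φ (((ψ x).val : ℕ) : ZMod n)).val = (ψ x).val := by
        rw [hφg, ZMod.val_cast_of_lt (lt_of_lt_of_le hc_lt halt.le)]
      have hgF : (((ψ x).val : ℕ) : ZMod n) ∈ F :=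
        (hmemF _).2 (by rw [hφgval]; exact ⟨hc_pos, hc_lt⟩)
      have hψg : ψ (((ψ x).val : ℕ) : ZMod n) = ψ x := by
        rw [map_natCast, ZMod.natCast_val, ZMod.cast_id]
      have hnadj : ¬ G.Adj x (((ψ x).val : ℕ) : ZMod n) :=
        hx.2 x (Finset.mem_union_left _ (Finset.mem_singleton_self x))
          _ (Finset.mem_union_right _ hgF)
      rw [hadj] at hnadj
      push_neg at hnadj
      by_cases hxg : x = (((ψ x).val : ℕ) : ZMod n)
      · exact hxF (hxg ▸ hgF)
      · have hφeq := hnadj hxg hψg.symm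
        exact hxF ((hmemF x).2 (by rw [hφeq, hφgval]; exact ⟨hc_pos, hc_lt⟩))
    have hstep : ∀ x y : ZMod n,
        (x ≠ y ∧ ({x, y} : Finset (ZMod n)) ∈ linkC (IndComplex G) F) → φ x = φ y := by
      rintro x y ⟨hxy, hmem⟩
      have hx := link_singleton hmem (Finset.mem_insert_self x {y})
      have hy := link_singleton hmem (Finset.mem_insert_of_mem (Finset.mem_singleton_self y))
      have hnadj : ¬ G.Adj x y :=
        hmem.2 x (Finset.mem_union_left _ (Finset.mem_insert_self x {y}))
          y (Finset.mem_union_left _ (Finset.mem_insert_of_mem (Finset.mem_singleton_self y)))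
      rw [hadj] at hnadj
      push_neg at hnadj
      exact hnadj hxy ((hvert x hx).trans (hvert y hy).symm)
    have hψtozero : ∀ x : ZMod n, ψ x = 0 → ∀ f ∈ F, ¬ G.Adj x f := by
      intro x hx f hf hadj'
      rw [hadj] at hadj'
      exact hψFne f hf (by rw [← hadj'.2.1]; exact hx)
    have hwit : ∀ S : Finset (ZMod n), (∀ x ∈ S, ψ x = 0) →
        (∀ x ∈ S, ∀ y ∈ S, ¬ G.Adj x y) → S ∈ linkC (IndComplex G) F := by
      intro S hS0 hSind
      constructor
      · rw [Finset.disjoint_left]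
        intro t htS htF
        exact hψFne t htF (hS0 t htS)
      · intro u hu v hv hadj'
        rcases Finset.mem_union.1 hu with hu | hu <;> rcases Finset.mem_union.1 hv with hv | hv
        · exact hSind u hu v hv hadj'
        · exact hψtozero u (hS0 u hu) v hv hadj'
        · exact hψtozero v (hS0 v hv) u hu hadj'.symm
        · exact hFind u hu v hv hadj'
    have hψ0' : ψ (0 : ZMod n) = 0 := map_zero ψ
    have hψa : ψ ((a : ℕ) : ZMod n) = 0 := by
      rw [map_natCast, ZMod.natCast_self]
    have hψab : ψ (((a * b : ℕ)) : ZMod n) = 0 := by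
      rw [map_natCast, Nat.cast_mul, ZMod.natCast_self, zero_mul]
    have hφab : φ (((a * b : ℕ)) : ZMod n) = 0 := by
      rw [map_natCast, ZMod.natCast_self]
    have habne : ((a * b : ℕ) : ZMod n) ≠ 0 := by
      intro h
      have h1 := (ZMod.natCast_eq_zero_iff (a * b) n).1 h
      have h2 := Nat.le_of_dvd habpos h1
      exact Nat.lt_irrefl _ (lt_of_le_of_lt h2 hablt)
    have h0ne : (0 : ZMod n) ≠ ((a * b : ℕ) : ZMod n) := fun h => habne h.symm
    have h0link : ({(0 : ZMod n)} : Finset (ZMod n)) ∈ linkC (IndComplex G) F := by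
      apply hwit
      · intro x hx; rw [Finset.mem_singleton.1 hx]; exact hψ0'
      · intro x hx y hy hadj'
        rw [Finset.mem_singleton] at hx hy
        subst hx; subst hy
        exact G.irrefl hadj'
    have halink : ({((a : ℕ) : ZMod n)} : Finset (ZMod n)) ∈ linkC (IndComplex G) F := by
      apply hwit
      · intro x hx; rw [Finset.mem_singleton.1 hx]; exact hψa
      · intro x hx y hy hadj'
        rw [Finset.mem_singleton] at hx hy
        subst hx; subst hy
        exact G.irrefl hadj'
    have hpairlink : ({(0 : ZMod n), ((a * b : ℕ) : ZMod n)} : Finset (ZMod n)) ∈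
        linkC (IndComplex G) F := by
      have hφ0 : ∀ z ∈ ({(0 : ZMod n), ((a * b : ℕ) : ZMod n)} : Finset (ZMod n)), φ z = 0 := by
        intro z hz
        rcases Finset.mem_insert.1 hz with rfl | hz
        · exact map_zero φ
        · rw [Finset.mem_singleton.1 hz]; exact hφab
      apply hwit
      · intro x hx
        rcases Finset.mem_insert.1 hx with rfl | hx
        · exact hψ0'
        · rw [Finset.mem_singleton.1 hx]; exact hψab
      · intro x hx y hy hadj'
        rw [hadj] at hadj'
        exact hadj'.2.2 ((hφ0 x hx).trans (hφ0 y hy).symm)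
    have hcard2 : 2 ≤ ({(0 : ZMod n), ((a * b : ℕ) : ZMod n)} : Finset (ZMod n)).card :=
      (Finset.card_pair h0ne).ge
    have hconn := hS2 F hFind ⟨_, hpairlink, hcard2⟩ (0 : ZMod n) h0link
      (((a : ℕ)) : ZMod n) halink
    have hφgen : ∀ x y : ZMod n, Relation.ReflTransGen
        (fun s t => s ≠ t ∧ ({s, t} : Finset (ZMod n)) ∈ linkC (IndComplex G) F) x y →
        φ x = φ y := by
      intro x y h
      induction h with
      | refl => rfl
      | tail h1 h2 ih => exact ih.trans (hstep _ _ h2)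
    have hφinv := hφgen _ _ hconn
    rw [map_zero, map_natCast] at hφinv
    have h1 : a * b ∣ a := (ZMod.natCast_eq_zero_iff a (a * b)).1 hφinv.symm
    have h2 := Nat.le_of_dvd (by omega) h1
    exact Nat.lt_irrefl _ (lt_of_lt_of_le halt h2)
  · -- n = a*b implies S₂
    intro hneq
    subst hneq
    have hφid : ∀ x : ZMod (a * b), φ x = x :=
      fun x => (ZMod.castHom_apply x).trans (ZMod.cast_id _ x)
    have hadj2 : ∀ i j : ZMod (a * b), G.Adj i j ↔ i ≠ j ∧ ψ i = ψ j := by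
      intro i j
      rw [hadj]
      constructor
      · rintro ⟨h1, h2, _⟩; exact ⟨h1, h2⟩
      · rintro ⟨h1, h2⟩
        refine ⟨h1, h2, ?_⟩
        rw [hφid, hφid]; exact h1
    intro F hF hdim
    obtain ⟨G₀, hG₀, hcard⟩ := hdim
    obtain ⟨p, hp, q, hq, hpq⟩ := Finset.one_lt_card.1 hcard
    have hpq' : ψ p ≠ ψ q := by
      have hnadj : ¬ G.Adj p q :=
        hG₀.2 p (Finset.mem_union_left _ hp) q (Finset.mem_union_left _ hq)
      intro h; exact hnadj ((hadj2 p q).2 ⟨hpq, h⟩)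
    have hplink := link_singleton hG₀ hp
    have hqlink := link_singleton hG₀ hq
    have hedge : ∀ x y : ZMod (a * b),
        ({x} : Finset (ZMod (a * b))) ∈ linkC (IndComplex G) F →
        ({y} : Finset (ZMod (a * b))) ∈ linkC (IndComplex G) F → ψ x ≠ ψ y →
        x ≠ y ∧ ({x, y} : Finset (ZMod (a * b))) ∈ linkC (IndComplex G) F := by
      intro x y hx hy hxy
      have hne' : x ≠ y := fun h => hxy (by rw [h])
      refine ⟨hne', ?_, ?_⟩
      · rw [Finset.disjoint_left]
        intro t ht htF
        rcases Finset.mem_insert.1 ht with rfl | ht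
        · exact Finset.disjoint_singleton_left.1 hx.1 htF
        · rw [Finset.mem_singleton] at ht
          subst ht
          exact Finset.disjoint_singleton_left.1 hy.1 htF
      · intro u hu v hv hadj'
        have hmem : ∀ z, z ∈ ({x, y} : Finset (ZMod (a * b))) ∪ F →
            z = x ∨ z = y ∨ z ∈ F := by
          intro z hz
          rcases Finset.mem_union.1 hz with hz | hz
          · rcases Finset.mem_insert.1 hz with rfl | hz
            · exact Or.inl rfl
            · exact Or.inr (Or.inl (Finset.mem_singleton.1 hz))
          · exact Or.inr (Or.inr hz)
        rcases hmem u hu with rfl | rfl | hu' <;> rcases hmem v hv with rfl | rfl | hv'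
        · exact G.irrefl hadj'
        · exact hxy ((hadj2 _ _).1 hadj').2
        · exact hx.2 u (Finset.mem_union_left _ (Finset.mem_singleton_self u))
            v (Finset.mem_union_right _ hv') hadj'
        · exact hxy (((hadj2 _ _).1 hadj').2).symm
        · exact G.irrefl hadj'
        · exact hy.2 u (Finset.mem_union_left _ (Finset.mem_singleton_self u))
            v (Finset.mem_union_right _ hv') hadj'
        · exact hx.2 u (Finset.mem_union_right _ hu')
            v (Finset.mem_union_left _ (Finset.mem_singleton_self v)) hadj'
        · exact hy.2 u (Finset.mem_union_right _ hu')
            v (Finset.mem_union_left _ (Finset.mem_singleton_self v)) hadj'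
        · exact hF u hu' v hv' hadj'
    intro u hu w hw
    by_cases huw : ψ u = ψ w
    · by_cases hueq : u = w
      · subst hueq
        exact Relation.ReflTransGen.refl
      · obtain ⟨r, hrlink, hr⟩ : ∃ r, ({r} : Finset (ZMod (a * b))) ∈ linkC (IndComplex G) F
            ∧ ψ r ≠ ψ u := by
          by_cases hpu : ψ p = ψ u
          · exact ⟨q, hqlink, fun h => hpq' (hpu.trans h.symm)⟩
          · exact ⟨p, hplink, hpu⟩
        exact Relation.ReflTransGen.head (hedge u r hu hrlink (Ne.symm hr))
          (Relation.ReflTransGen.single (hedge r w hrlink hw fun h => hr (h.trans huw.symm)))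
    · exact Relation.ReflTransGen.single (hedge u w hu hw huw)
end

section
/- Let b ≥ 2 and m ≥ 1 be integers and let G = C(mb; 1, b) be the one-paired circulant graph on mb vertices. Then G satisfies Serre's condition S_2 if and only if m = 1. -/
section Aux

variable {b m : ℕ}

lemma adj_iff (hb : 2 ≤ b) (hm : 1 ≤ m) (x y : ZMod (m * b)) :
    (circulantGraph (m * b) (onePairedSet (m * b) 1 b)).Adj x y ↔
      x ≠ y ∧ ¬ b ∣ (x - y).val := by
  have hn : 0 < m * b := Nat.mul_pos hm (by omega)
  haveI : NeZero (m * b) := ⟨hn.ne'⟩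
  constructor
  · rintro ⟨hne, hS⟩
    refine ⟨hne, ?_⟩
    have hsub : x - y ≠ 0 := sub_ne_zero.mpr hne
    have hvpos : 0 < (x - y).val := ZMod.val_pos.mpr hsub
    have hvlt : (x - y).val < m * b := ZMod.val_lt _
    have hneg : (y - x).val = m * b - (x - y).val := by
      rw [show y - x = -(x - y) by ring, ZMod.neg_val]
      simp [hsub]
    rcases hS with h | h
    · intro hd
      exact h.2.2.2 (by simpa using hd)
    · intro hd
      rw [hneg] at h
      exact h.2.2.2 (by simpa using (Nat.dvd_sub ⟨m, Nat.mul_comm m b⟩ hd))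
  · rintro ⟨hne, hd⟩
    refine ⟨hne, ?_⟩
    have hsub : x - y ≠ 0 := sub_ne_zero.mpr hne
    have hvpos : 0 < (x - y).val := ZMod.val_pos.mpr hsub
    have hvlt : (x - y).val < m * b := ZMod.val_lt _
    have hneg : (y - x).val = m * b - (x - y).val := by
      rw [show y - x = -(x - y) by ring, ZMod.neg_val]
      simp [hsub]
    by_cases hle : (x - y).val ≤ m * b / 2
    · exact Or.inl ⟨hvpos, hle, one_dvd _, by simpa using hd⟩
    · refine Or.inr ⟨by omega, by rw [hneg]; omega, one_dvd _, ?_⟩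
      rw [hneg]
      simp only [one_mul]
      intro hdvd
      exact hd (by
        have : b ∣ m * b - (m * b - (x - y).val) := Nat.dvd_sub ⟨m, Nat.mul_comm m b⟩ hdvd
        rwa [Nat.sub_sub_self hvlt.le] at this)

end Aux

/-- The one-paired circulant graph `C(mb; 1, b)` (with `b ≥ 2`, `m ≥ 1`) is `S₂`
iff `m = 1`. -/
theorem onePaired_a_one_S2_iff (b m : ℕ) (hb : 2 ≤ b) (hm : 1 ≤ m) :
    GraphS2 (circulantGraph (m * b) (onePairedSet (m * b) 1 b)) ↔ m = 1 := by
  have hn : 0 < m * b := Nat.mul_pos hm (by omega)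
  haveI : NeZero (m * b) := ⟨hn.ne'⟩
  haveI : NeZero b := ⟨by omega⟩
  haveI : Fact (1 < b) := ⟨hb⟩
  set G := circulantGraph (m * b) (onePairedSet (m * b) 1 b) with hG
  constructor
  · intro hS2
    by_contra hm1
    have hm2 : 2 ≤ m := by omega
    -- the reduction map mod b
    set φ : ZMod (m * b) →+* ZMod b := ZMod.castHom ⟨m, Nat.mul_comm m b⟩ (ZMod b) with hφ
    have hdvd_iff : ∀ x : ZMod (m * b), b ∣ x.val ↔ φ x = 0 := by
      intro x
      rw [← ZMod.natCast_eq_zero_iff]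
      constructor
      · intro h; rw [hφ, ZMod.castHom_apply, ← ZMod.natCast_val]; exact h
      · intro h; rw [hφ, ZMod.castHom_apply, ← ZMod.natCast_val] at h; exact h
    -- non-adjacency means equal residues
    have hstep : ∀ x y : ZMod (m * b), x ≠ y → ¬ G.Adj x y → φ x = φ y := by
      intro x y hne hadj
      have := (adj_iff hb hm x y).not.mp hadj
      push_neg at this
      have hd : b ∣ (x - y).val := this hne
      have : φ (x - y) = 0 := (hdvd_iff _).mp hd
      rw [map_sub] at this
      exact sub_eq_zero.mp this
    -- apply S2 at the empty face
    have h0 : (∅ : Finset (ZMod (m * b))) ∈ IndComplex G := by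
      intro u hu; simp at hu
    have hwit : ∃ W ∈ linkC (IndComplex G) (∅ : Finset (ZMod (m * b))), 2 ≤ W.card := by
      refine ⟨{0, (b : ZMod (m * b))}, ⟨Finset.disjoint_empty_right _, ?_⟩, ?_⟩
      · rw [Finset.union_empty]
        intro u hu v hv
        simp only [Finset.mem_insert, Finset.mem_singleton] at hu hv
        have hnadj : ∀ p q : ZMod (m * b), φ p = φ q → ¬ G.Adj p q := by
          intro p q hpq hadj
          obtain ⟨hne, hd⟩ := (adj_iff hb hm p q).mp hadj
          apply hd
          rw [hdvd_iff, map_sub, hpq, sub_self]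
        have hres : φ (0 : ZMod (m * b)) = φ ((b : ℕ) : ZMod (m * b)) := by
          rw [map_zero, map_natCast, ZMod.natCast_self]
        rcases hu with rfl | rfl <;> rcases hv with rfl | rfl
        · exact fun h => G.loopless.irrefl _ h
        · exact hnadj _ _ hres
        · exact hnadj _ _ hres.symm
        · exact fun h => G.loopless.irrefl _ h
      · have hb0 : ((b : ℕ) : ZMod (m * b)) ≠ 0 := by
          rw [Ne, ZMod.natCast_eq_zero_iff]
          intro h
          have := Nat.le_of_dvd (by omega) h
          nlinarith
        rw [Finset.card_insert_of_notMem (by simpa using hb0.symm), Finset.card_singleton]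
    have hconn := hS2 ∅ h0 hwit
    have h01 : (0 : ZMod (m * b)) ≠ 1 := by
      haveI : Fact (1 < m * b) := ⟨by nlinarith⟩
      exact zero_ne_one
    have hsingle : ∀ v : ZMod (m * b), ({v} : Finset (ZMod (m * b))) ∈ linkC (IndComplex G) ∅ := by
      intro v
      refine ⟨Finset.disjoint_empty_right _, ?_⟩
      rw [Finset.union_empty]
      intro u hu w hw
      simp only [Finset.mem_singleton] at hu hw
      subst hu; subst hw
      exact fun h => G.loopless.irrefl _ h
    have hpath := hconn 0 (hsingle 0) 1 (hsingle 1)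
    have key : ∀ u w : ZMod (m * b),
        Relation.ReflTransGen
          (fun a c => a ≠ c ∧ ({a, c} : Finset (ZMod (m * b))) ∈ linkC (IndComplex G) ∅) u w →
        φ u = φ w := by
      intro u w h
      induction h with
      | refl => rfl
      | @tail p q hab hlast ih =>
        obtain ⟨hne, hdisj', hmem⟩ := hlast
        rw [Finset.union_empty] at hmem
        have hnadj : ¬ G.Adj p q := hmem p (by simp) q (by simp)
        exact ih.trans (hstep p q hne hnadj)
    have hres := key 0 1 hpath
    rw [map_zero, map_one] at hres
    exact zero_ne_one hres
  · intro hm1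
    intro F hF hex
    exfalso
    obtain ⟨W, ⟨hdisj, hmem⟩, hcard⟩ := hex
    obtain ⟨u, hu, v, hv, huv⟩ := Finset.one_lt_card.mp (show 1 < W.card by omega)
    have hadj : G.Adj u v := by
      rw [adj_iff hb hm]
      refine ⟨huv, ?_⟩
      intro hd
      have hvpos : 0 < (u - v).val := ZMod.val_pos.mpr (sub_ne_zero.mpr huv)
      have hvlt : (u - v).val < m * b := ZMod.val_lt _
      have hle := Nat.le_of_dvd hvpos hd
      have hb' : m * b = b := by rw [hm1, one_mul]
      have hvlt' : (u - v).val < b := Nat.lt_of_lt_of_le hvlt hb'.le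
      omega
    exact hmem u (Finset.mem_union_left _ hu) v (Finset.mem_union_left _ hv) hadj
end

section
/- Let Δ_1 and Δ_2 be simplicial complexes with disjoint vertex sets. Then the join Δ = Δ_1 ∗ Δ_2 satisfies Serre's condition S_2 if and only if both Δ_1 and Δ_2 satisfy Serre's condition S_2. -/
section JoinS2Aux

variable {V : Type*} [DecidableEq V]

lemma mem_of_mem_linkC {Δ : Set (Finset V)} (h : IsComplex Δ) {F G : Finset V}
    (hG : G ∈ linkC Δ F) : G ∈ Δ :=
  h _ hG.2 _ Finset.subset_union_left

lemma linkC_isComplex {Δ : Set (Finset V)} (h : IsComplex Δ) (F : Finset V) :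
    IsComplex (linkC Δ F) := by
  intro G hG H hH
  exact ⟨Finset.disjoint_of_subset_left hH hG.1,
    h _ hG.2 _ (Finset.union_subset_union hH le_rfl)⟩

lemma empty_mem_linkC {Δ : Set (Finset V)} {F : Finset V} (hF : F ∈ Δ) :
    (∅ : Finset V) ∈ linkC Δ F :=
  ⟨by simp, by simpa using hF⟩

lemma linkC_eq_of_maximal {Δ : Set (Finset V)} {F : Finset V} (hF : F ∈ Δ)
    (hmax : ∀ H ∈ Δ, F ⊆ H → F = H) :
    linkC Δ F = {∅} := by
  ext G
  simp only [Set.mem_singleton_iff]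
  constructor
  · rintro ⟨hd, hm⟩
    have h1 : F = G ∪ F := hmax _ hm Finset.subset_union_right
    have hGsub : G ⊆ F := h1 ▸ Finset.subset_union_left
    exact Finset.eq_empty_iff_forall_notMem.mpr fun a ha =>
      Finset.disjoint_left.mp hd ha (hGsub ha)
  · rintro rfl
    exact empty_mem_linkC hF

lemma joinC_empty_right (Δ : Set (Finset V)) :
    joinC Δ {(∅ : Finset V)} = Δ := by
  ext G
  constructor
  · rintro ⟨G₁, h1, G₂, (rfl : G₂ = ∅), rfl⟩
    simpa using h1
  · intro h
    exact ⟨G, h, ∅, rfl, by simp⟩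

lemma joinC_empty_left (Δ : Set (Finset V)) :
    joinC {(∅ : Finset V)} Δ = Δ := by
  ext G
  constructor
  · rintro ⟨G₁, (rfl : G₁ = ∅), G₂, h2, rfl⟩
    simpa using h2
  · intro h
    exact ⟨∅, rfl, G, h, by simp⟩

lemma link_join_eq {Δ₁ Δ₂ : Set (Finset V)} (h₁ : IsComplex Δ₁) (h₂ : IsComplex Δ₂)
    (hdisj : ∀ F₁ ∈ Δ₁, ∀ F₂ ∈ Δ₂, Disjoint F₁ F₂)
    {F₁ F₂ : Finset V} (hF₁ : F₁ ∈ Δ₁) (hF₂ : F₂ ∈ Δ₂) :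
    linkC (joinC Δ₁ Δ₂) (F₁ ∪ F₂) = joinC (linkC Δ₁ F₁) (linkC Δ₂ F₂) := by
  ext G
  constructor
  · rintro ⟨hGd, H₁, hH₁, H₂, hH₂, hU⟩
    have hGsub : G ⊆ H₁ ∪ H₂ := hU ▸ Finset.subset_union_left
    have hF₁sub : F₁ ⊆ H₁ := by
      intro a ha
      have : a ∈ H₁ ∪ H₂ := hU ▸ (by simp [ha] : a ∈ G ∪ (F₁ ∪ F₂))
      rcases Finset.mem_union.mp this with h | h
      · exact h
      · exact absurd h (Finset.disjoint_left.mp (hdisj _ hF₁ _ hH₂) ha)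
    have hF₂sub : F₂ ⊆ H₂ := by
      intro a ha
      have : a ∈ H₁ ∪ H₂ := hU ▸ (by simp [ha] : a ∈ G ∪ (F₁ ∪ F₂))
      rcases Finset.mem_union.mp this with h | h
      · exact absurd ha (Finset.disjoint_left.mp (hdisj _ hH₁ _ hF₂) h)
      · exact h
    refine ⟨G ∩ H₁, ⟨?_, ?_⟩, G ∩ H₂, ⟨?_, ?_⟩, ?_⟩
    · exact Finset.disjoint_of_subset_left Finset.inter_subset_left
        (Finset.disjoint_of_subset_right Finset.subset_union_left hGd)
    · exact h₁ _ hH₁ _ (Finset.union_subset Finset.inter_subset_right hF₁sub)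
    · exact Finset.disjoint_of_subset_left Finset.inter_subset_left
        (Finset.disjoint_of_subset_right Finset.subset_union_right hGd)
    · exact h₂ _ hH₂ _ (Finset.union_subset Finset.inter_subset_right hF₂sub)
    · rw [← Finset.inter_union_distrib_left]
      exact (Finset.inter_eq_left.mpr hGsub).symm
  · rintro ⟨G₁, ⟨hd₁, hm₁⟩, G₂, ⟨hd₂, hm₂⟩, rfl⟩
    have hG₁ : G₁ ∈ Δ₁ := h₁ _ hm₁ _ Finset.subset_union_left
    have hG₂ : G₂ ∈ Δ₂ := h₂ _ hm₂ _ Finset.subset_union_left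
    refine ⟨?_, G₁ ∪ F₁, hm₁, G₂ ∪ F₂, hm₂, ?_⟩
    · refine Finset.disjoint_union_left.mpr ⟨?_, ?_⟩ <;>
        refine Finset.disjoint_union_right.mpr ⟨?_, ?_⟩
      · exact hd₁
      · exact hdisj _ hG₁ _ hF₂
      · exact (hdisj _ hF₁ _ hG₂).symm
      · exact hd₂
    · ext a
      simp only [Finset.mem_union]
      tauto

lemma vertex_cases {L₁ L₂ : Set (Finset V)} {u : V}
    (hu : ({u} : Finset V) ∈ joinC L₁ L₂) : ({u} : Finset V) ∈ L₁ ∨ ({u} : Finset V) ∈ L₂ := by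
  obtain ⟨G₁, hG₁, G₂, hG₂, hU⟩ := hu
  have hmem : u ∈ G₁ ∪ G₂ := hU ▸ Finset.mem_singleton_self u
  rcases Finset.mem_union.mp hmem with h | h
  · left
    have : G₁ = {u} := Finset.Subset.antisymm (hU ▸ Finset.subset_union_left)
      (Finset.singleton_subset_iff.mpr h)
    exact this ▸ hG₁
  · right
    have : G₂ = {u} := Finset.Subset.antisymm (hU ▸ Finset.subset_union_right)
      (Finset.singleton_subset_iff.mpr h)
    exact this ▸ hG₂

end JoinS2Aux

/-- For simplicial complexes `Δ₁`, `Δ₂` with disjoint vertex sets, the join `Δ₁ ∗ Δ₂`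
is `S₂` iff both `Δ₁` and `Δ₂` are `S₂`. -/
theorem join_S2_iff {V : Type*} [DecidableEq V] [Fintype V]
    (Δ₁ Δ₂ : Set (Finset V)) (h₁ : IsComplex Δ₁) (h₂ : IsComplex Δ₂)
    (he₁ : (∅ : Finset V) ∈ Δ₁) (he₂ : (∅ : Finset V) ∈ Δ₂)
    (hdisj : ∀ F₁ ∈ Δ₁, ∀ F₂ ∈ Δ₂, Disjoint F₁ F₂) :
    IsS2 (joinC Δ₁ Δ₂) ↔ IsS2 Δ₁ ∧ IsS2 Δ₂ := by
  constructor
  · intro hS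
    constructor
    · intro F₁ hF₁ hdim
      obtain ⟨F₂, hF₂, hmax⟩ := Set.Finite.exists_maximalFor id Δ₂ (Set.toFinite Δ₂) ⟨∅, he₂⟩
      have hmax' : ∀ H ∈ Δ₂, F₂ ⊆ H → F₂ = H := fun H hH hsub => Finset.Subset.antisymm hsub (hmax hH hsub)
      have hlink : linkC (joinC Δ₁ Δ₂) (F₁ ∪ F₂) = linkC Δ₁ F₁ := by
        rw [link_join_eq h₁ h₂ hdisj hF₁ hF₂, linkC_eq_of_maximal hF₂ hmax', joinC_empty_right]
      have hmem : F₁ ∪ F₂ ∈ joinC Δ₁ Δ₂ := ⟨F₁, hF₁, F₂, hF₂, rfl⟩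
      have := hS _ hmem (by rw [hlink]; exact hdim)
      rwa [hlink] at this
    · intro F₂ hF₂ hdim
      obtain ⟨F₁, hF₁, hmax⟩ := Set.Finite.exists_maximalFor id Δ₁ (Set.toFinite Δ₁) ⟨∅, he₁⟩
      have hmax' : ∀ H ∈ Δ₁, F₁ ⊆ H → F₁ = H := fun H hH hsub => Finset.Subset.antisymm hsub (hmax hH hsub)
      have hlink : linkC (joinC Δ₁ Δ₂) (F₁ ∪ F₂) = linkC Δ₂ F₂ := by
        rw [link_join_eq h₁ h₂ hdisj hF₁ hF₂, linkC_eq_of_maximal hF₁ hmax', joinC_empty_left]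
      have hmem : F₁ ∪ F₂ ∈ joinC Δ₁ Δ₂ := ⟨F₁, hF₁, F₂, hF₂, rfl⟩
      have := hS _ hmem (by rw [hlink]; exact hdim)
      rwa [hlink] at this
  · rintro ⟨hS1, hS2⟩
    intro F hF hdim
    obtain ⟨F₁, hF₁, F₂, hF₂, rfl⟩ := hF
    rw [link_join_eq h₁ h₂ hdisj hF₁ hF₂] at hdim ⊢
    by_cases hv₁ : ∃ a, ({a} : Finset V) ∈ linkC Δ₁ F₁
    · by_cases hv₂ : ∃ b, ({b} : Finset V) ∈ linkC Δ₂ F₂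
      · obtain ⟨a, ha⟩ := hv₁
        obtain ⟨b, hb⟩ := hv₂
        have hedge : ∀ x y : V, ({x} : Finset V) ∈ linkC Δ₁ F₁ → ({y} : Finset V) ∈ linkC Δ₂ F₂ →
            x ≠ y ∧ ({x, y} : Finset V) ∈ joinC (linkC Δ₁ F₁) (linkC Δ₂ F₂) := by
          intro x y hx hy
          have hx1 : ({x} : Finset V) ∈ Δ₁ := mem_of_mem_linkC h₁ hx
          have hy2 : ({y} : Finset V) ∈ Δ₂ := mem_of_mem_linkC h₂ hy
          have hne : x ≠ y := by
            intro h
            subst h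
            have := hdisj _ hx1 _ hy2
            simp at this
          exact ⟨hne, {x}, hx, {y}, hy, (by ext c; simp)⟩
        have step12 : ∀ x y, ({x} : Finset V) ∈ linkC Δ₁ F₁ → ({y} : Finset V) ∈ linkC Δ₂ F₂ →
            Relation.ReflTransGen
              (fun c d => c ≠ d ∧ ({c, d} : Finset V) ∈ joinC (linkC Δ₁ F₁) (linkC Δ₂ F₂)) x y :=
          fun x y hx hy => Relation.ReflTransGen.single (hedge x y hx hy)
        have step21 : ∀ x y, ({x} : Finset V) ∈ linkC Δ₂ F₂ → ({y} : Finset V) ∈ linkC Δ₁ F₁ →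
            Relation.ReflTransGen
              (fun c d => c ≠ d ∧ ({c, d} : Finset V) ∈ joinC (linkC Δ₁ F₁) (linkC Δ₂ F₂)) x y :=
          fun x y hx hy => Relation.ReflTransGen.single
            ⟨(hedge y x hy hx).1.symm, by rw [Finset.pair_comm]; exact (hedge y x hy hx).2⟩
        intro u hu w hw
        rcases vertex_cases hu with hu1 | hu2 <;> rcases vertex_cases hw with hw1 | hw2
        · exact (step12 u b hu1 hb).trans (step21 b w hb hw1)
        · exact step12 u w hu1 hw2
        · exact step21 u w hu2 hw1
        · exact (step21 u a hu2 ha).trans (step12 a w ha hw2)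
      · have hL2empty : ∀ G ∈ linkC Δ₂ F₂, G = ∅ := by
          intro G hG
          by_contra hne
          obtain ⟨v, hv⟩ := Finset.nonempty_iff_ne_empty.mpr hne
          exact hv₂ ⟨v, linkC_isComplex h₂ F₂ G hG {v} (Finset.singleton_subset_iff.mpr hv)⟩
        have hjoin : joinC (linkC Δ₁ F₁) (linkC Δ₂ F₂) = linkC Δ₁ F₁ := by
          ext G
          constructor
          · rintro ⟨G₁, hG₁, G₂, hG₂, rfl⟩
            rw [hL2empty G₂ hG₂]
            simpa using hG₁
          · intro h
            exact ⟨G, h, ∅, empty_mem_linkC hF₂, by simp⟩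
        rw [hjoin] at hdim ⊢
        exact hS1 F₁ hF₁ hdim
    · have hL1empty : ∀ G ∈ linkC Δ₁ F₁, G = ∅ := by
        intro G hG
        by_contra hne
        obtain ⟨v, hv⟩ := Finset.nonempty_iff_ne_empty.mpr hne
        exact hv₁ ⟨v, linkC_isComplex h₁ F₁ G hG {v} (Finset.singleton_subset_iff.mpr hv)⟩
      have hjoin : joinC (linkC Δ₁ F₁) (linkC Δ₂ F₂) = linkC Δ₂ F₂ := by
        ext G
        constructor
        · rintro ⟨G₁, hG₁, G₂, hG₂, rfl⟩
          rw [hL1empty G₁ hG₁]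
          simpa using hG₂
        · intro h
          exact ⟨∅, empty_mem_linkC hF₁, G, h, by simp⟩
      rw [hjoin] at hdim ⊢
      exact hS2 F₂ hF₂ hdim
end

section
/- Let G be a simple graph which is the disjoint union of two graphs H and K. Then G satisfies Serre's condition S_2 if and only if both H and K satisfy Serre's condition S_2. -/
section DisjUnionAux

open Sum Finset

variable {α β : Type*} [DecidableEq α] [DecidableEq β]

private lemma indSub {V : Type*} {G : SimpleGraph V} {F T : Finset V}
    (hF : F ∈ IndComplex G) (h : T ⊆ F) : T ∈ IndComplex G :=
  fun u hu v hv => hF u (h hu) v (h hv)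

private lemma linkSub {V : Type*} [DecidableEq V] {G : SimpleGraph V} {F S T : Finset V}
    (hS : S ∈ linkC (IndComplex G) F) (h : T ⊆ S) : T ∈ linkC (IndComplex G) F :=
  ⟨hS.1.mono_left h, indSub hS.2 (Finset.union_subset_union_left h)⟩

private lemma mem_ind_sum {H : SimpleGraph α} {K : SimpleGraph β} {F : Finset (α ⊕ β)} :
    F ∈ IndComplex (H ⊕g K) ↔ F.toLeft ∈ IndComplex H ∧ F.toRight ∈ IndComplex K := by
  constructor
  · intro h
    refine ⟨fun u hu v hv hadj => ?_, fun u hu v hv hadj => ?_⟩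
    · exact h (inl u) (mem_toLeft.1 hu) (inl v) (mem_toLeft.1 hv) hadj
    · exact h (inr u) (mem_toRight.1 hu) (inr v) (mem_toRight.1 hv) hadj
  · rintro ⟨h1, h2⟩ u hu v hv hadj
    cases u with
    | inl u =>
      cases v with
      | inl v => exact h1 u (mem_toLeft.2 hu) v (mem_toLeft.2 hv) hadj
      | inr v => simp [SimpleGraph.sum] at hadj
    | inr u =>
      cases v with
      | inl v => simp [SimpleGraph.sum] at hadj
      | inr v => exact h2 u (mem_toRight.2 hu) v (mem_toRight.2 hv) hadj

private def embl : α ↪ α ⊕ β := ⟨inl, inl_injective⟩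
private def embr : β ↪ α ⊕ β := ⟨inr, inr_injective⟩

@[simp] private lemma embl_apply (a : α) : (embl (β := β)) a = inl a := rfl
@[simp] private lemma embr_apply (b : β) : (embr (α := α)) b = inr b := rfl

@[simp] private lemma toLeft_map_embl (S : Finset α) :
    (S.map (embl (β := β))).toLeft = S := by ext x; simp [embl]
@[simp] private lemma toRight_map_embl (S : Finset α) :
    (S.map (embl (β := β))).toRight = ∅ := by ext x; simp [embl]
@[simp] private lemma toLeft_map_embr (S : Finset β) :
    (S.map (embr (α := α))).toLeft = ∅ := by ext x; simp [embr]
@[simp] private lemma toRight_map_embr (S : Finset β) :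
    (S.map (embr (α := α))).toRight = S := by ext x; simp [embr]

private lemma eq_map_toLeft {S : Finset (α ⊕ β)} (h : S.toRight = ∅) :
    S = S.toLeft.map embl := by
  ext u
  cases u with
  | inl x => simp [embl]
  | inr b =>
    simp only [mem_map, embl]
    constructor
    · intro hb
      have : b ∈ S.toRight := mem_toRight.2 hb
      simp [h] at this
    · rintro ⟨x, -, hx⟩; exact absurd hx (by simp)

private lemma eq_map_toRight {S : Finset (α ⊕ β)} (h : S.toLeft = ∅) :
    S = S.toRight.map embr := by
  ext u
  cases u with
  | inr x => simp [embr]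
  | inl b =>
    simp only [mem_map, embr]
    constructor
    · intro hb
      have : b ∈ S.toLeft := mem_toLeft.2 hb
      simp [h] at this
    · rintro ⟨x, -, hx⟩; exact absurd hx (by simp)

private lemma map_inl_mem_link {H : SimpleGraph α} {K : SimpleGraph β} {F : Finset (α ⊕ β)}
    (hF : F ∈ IndComplex (H ⊕g K)) (S : Finset α) :
    S.map embl ∈ linkC (IndComplex (H ⊕g K)) F ↔ S ∈ linkC (IndComplex H) F.toLeft := by
  constructor
  · rintro ⟨hd, hm⟩
    refine ⟨?_, ?_⟩
    · rw [Finset.disjoint_left]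
      intro x hx hx'
      exact (Finset.disjoint_left.1 hd) (mem_map_of_mem _ hx) (mem_toLeft.1 hx')
    · have := (mem_ind_sum.1 hm).1
      rwa [toLeft_union, toLeft_map_embl] at this
  · rintro ⟨hd, hm⟩
    refine ⟨?_, ?_⟩
    · rw [Finset.disjoint_left]
      rintro u hu hu'
      obtain ⟨x, hx, rfl⟩ := mem_map.1 hu
      exact (Finset.disjoint_left.1 hd) hx (mem_toLeft.2 (by simpa [embl] using hu'))
    · refine mem_ind_sum.2 ⟨?_, ?_⟩
      · rwa [toLeft_union, toLeft_map_embl]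
      · rw [toRight_union, toRight_map_embl, Finset.empty_union]
        exact (mem_ind_sum.1 hF).2

private lemma map_inr_mem_link {H : SimpleGraph α} {K : SimpleGraph β} {F : Finset (α ⊕ β)}
    (hF : F ∈ IndComplex (H ⊕g K)) (S : Finset β) :
    S.map embr ∈ linkC (IndComplex (H ⊕g K)) F ↔ S ∈ linkC (IndComplex K) F.toRight := by
  constructor
  · rintro ⟨hd, hm⟩
    refine ⟨?_, ?_⟩
    · rw [Finset.disjoint_left]
      intro x hx hx'
      exact (Finset.disjoint_left.1 hd) (mem_map_of_mem _ hx) (mem_toRight.1 hx')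
    · have := (mem_ind_sum.1 hm).2
      rwa [toRight_union, toRight_map_embr] at this
  · rintro ⟨hd, hm⟩
    refine ⟨?_, ?_⟩
    · rw [Finset.disjoint_left]
      rintro u hu hu'
      obtain ⟨x, hx, rfl⟩ := mem_map.1 hu
      exact (Finset.disjoint_left.1 hd) hx (mem_toRight.2 (by simpa [embr] using hu'))
    · refine mem_ind_sum.2 ⟨?_, ?_⟩
      · rw [toLeft_union, toLeft_map_embr, Finset.empty_union]
        exact (mem_ind_sum.1 hF).1
      · rwa [toRight_union, toRight_map_embr]

private lemma singleton_inl_mem_link {H : SimpleGraph α} {K : SimpleGraph β} {F : Finset (α ⊕ β)}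
    (hF : F ∈ IndComplex (H ⊕g K)) (x : α) :
    ({inl x} : Finset (α ⊕ β)) ∈ linkC (IndComplex (H ⊕g K)) F ↔
      ({x} : Finset α) ∈ linkC (IndComplex H) F.toLeft := by
  simpa using map_inl_mem_link hF {x}

private lemma singleton_inr_mem_link {H : SimpleGraph α} {K : SimpleGraph β} {F : Finset (α ⊕ β)}
    (hF : F ∈ IndComplex (H ⊕g K)) (y : β) :
    ({inr y} : Finset (α ⊕ β)) ∈ linkC (IndComplex (H ⊕g K)) F ↔
      ({y} : Finset β) ∈ linkC (IndComplex K) F.toRight := by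
  simpa using map_inr_mem_link hF {y}

private lemma pair_inl_mem_link {H : SimpleGraph α} {K : SimpleGraph β} {F : Finset (α ⊕ β)}
    (hF : F ∈ IndComplex (H ⊕g K)) (x y : α) :
    ({inl x, inl y} : Finset (α ⊕ β)) ∈ linkC (IndComplex (H ⊕g K)) F ↔
      ({x, y} : Finset α) ∈ linkC (IndComplex H) F.toLeft := by
  simpa [Finset.map_insert] using map_inl_mem_link hF {x, y}

private lemma pair_inr_mem_link {H : SimpleGraph α} {K : SimpleGraph β} {F : Finset (α ⊕ β)}
    (hF : F ∈ IndComplex (H ⊕g K)) (x y : β) :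
    ({inr x, inr y} : Finset (α ⊕ β)) ∈ linkC (IndComplex (H ⊕g K)) F ↔
      ({x, y} : Finset β) ∈ linkC (IndComplex K) F.toRight := by
  simpa [Finset.map_insert] using map_inr_mem_link hF {x, y}

private lemma mixed_edge {H : SimpleGraph α} {K : SimpleGraph β} {F : Finset (α ⊕ β)}
    (hF : F ∈ IndComplex (H ⊕g K)) {x : α} {y : β}
    (hx : ({inl x} : Finset (α ⊕ β)) ∈ linkC (IndComplex (H ⊕g K)) F)
    (hy : ({inr y} : Finset (α ⊕ β)) ∈ linkC (IndComplex (H ⊕g K)) F) :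
    ({inl x, inr y} : Finset (α ⊕ β)) ∈ linkC (IndComplex (H ⊕g K)) F := by
  refine ⟨?_, ?_⟩
  · rw [Finset.disjoint_left]
    intro u hu hu'
    rcases Finset.mem_insert.1 hu with rfl | hu
    · exact (Finset.disjoint_left.1 hx.1) (by simp) hu'
    · rw [Finset.mem_singleton] at hu
      subst hu
      exact (Finset.disjoint_left.1 hy.1) (by simp) hu'
  · refine mem_ind_sum.2 ⟨?_, ?_⟩
    · have h1 := (mem_ind_sum.1 hx.2).1
      have he : (({inl x, inr y} : Finset (α ⊕ β)) ∪ F).toLeft =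
          (({inl x} : Finset (α ⊕ β)) ∪ F).toLeft := by ext t; simp
      rw [he]; exact h1
    · have h1 := (mem_ind_sum.1 hy.2).2
      have he : (({inl x, inr y} : Finset (α ⊕ β)) ∪ F).toRight =
          (({inr y} : Finset (α ⊕ β)) ∪ F).toRight := by ext t; simp
      rw [he]; exact h1

private lemma exists_maximal_ind {V : Type*} [Fintype V] [DecidableEq V] (G : SimpleGraph V) :
    ∃ M ∈ IndComplex G, ∀ b ∉ M, insert b M ∉ IndComplex G := by
  classical
  obtain ⟨M, hM, hMmax⟩ := Finset.exists_maximal (s :=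
    ((Finset.univ : Finset (Finset V)).filter (fun T => T ∈ IndComplex G)))
    ⟨∅, Finset.mem_filter.2 ⟨Finset.mem_univ _, fun u hu => absurd hu (Finset.notMem_empty u)⟩⟩
  refine ⟨M, (Finset.mem_filter.1 hM).2, fun b hb hbM => ?_⟩
  exact hb (hMmax (Finset.mem_filter.2 ⟨Finset.mem_univ _, hbM⟩) (Finset.subset_insert _ _) (Finset.mem_insert_self b M))

private lemma descend_left {Δ : Set (Finset (α ⊕ β))} {Λ : Set (Finset α)}
    (hno : ∀ b : β, ({inr b} : Finset (α ⊕ β)) ∉ Δ)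
    (hdown : ∀ S ∈ Δ, ∀ T ⊆ S, T ∈ Δ)
    (hedge : ∀ x y : α, ({inl x, inl y} : Finset (α ⊕ β)) ∈ Δ → ({x, y} : Finset α) ∈ Λ)
    {x : α} {c : α ⊕ β}
    (h : Relation.ReflTransGen
      (fun a b => a ≠ b ∧ ({a, b} : Finset (α ⊕ β)) ∈ Δ) (inl x) c) :
    ∀ y, c = inl y →
      Relation.ReflTransGen (fun a b => a ≠ b ∧ ({a, b} : Finset α) ∈ Λ) x y := by
  induction h with
  | refl => rintro y hy; cases inl_injective hy; exact Relation.ReflTransGen.refl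
  | @tail b c _ step ih =>
    rintro y rfl
    cases b with
    | inr z =>
      exact absurd (hdown _ step.2 {inr z} (by intro t ht; simp at ht; simp [ht])) (hno z)
    | inl z =>
      refine Relation.ReflTransGen.tail (ih z rfl) ⟨?_, hedge z y step.2⟩
      intro hzy; exact step.1 (by rw [hzy])

private lemma descend_right {Δ : Set (Finset (α ⊕ β))} {Λ : Set (Finset β)}
    (hno : ∀ b : α, ({inl b} : Finset (α ⊕ β)) ∉ Δ)
    (hdown : ∀ S ∈ Δ, ∀ T ⊆ S, T ∈ Δ)
    (hedge : ∀ x y : β, ({inr x, inr y} : Finset (α ⊕ β)) ∈ Δ → ({x, y} : Finset β) ∈ Λ)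
    {x : β} {c : α ⊕ β}
    (h : Relation.ReflTransGen
      (fun a b => a ≠ b ∧ ({a, b} : Finset (α ⊕ β)) ∈ Δ) (inr x) c) :
    ∀ y, c = inr y →
      Relation.ReflTransGen (fun a b => a ≠ b ∧ ({a, b} : Finset β) ∈ Λ) x y := by
  induction h with
  | refl => rintro y hy; cases inr_injective hy; exact Relation.ReflTransGen.refl
  | @tail b c _ step ih =>
    rintro y rfl
    cases b with
    | inl z =>
      exact absurd (hdown _ step.2 {inl z} (by intro t ht; simp at ht; simp [ht])) (hno z)
    | inr z =>
      refine Relation.ReflTransGen.tail (ih z rfl) ⟨?_, hedge z y step.2⟩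
      intro hzy; exact step.1 (by rw [hzy])

private lemma S2_of_sum_left {H : SimpleGraph α} {K : SimpleGraph β} [Fintype β]
    (h : GraphS2 (H ⊕g K)) : GraphS2 H := by
  obtain ⟨M, hM, hMmax⟩ := exists_maximal_ind K
  rintro F hF ⟨G2, hG2, hcard⟩
  set F' : Finset (α ⊕ β) := F.map embl ∪ M.map embr with hF'def
  have hFL : F'.toLeft = F := by simp [hF'def, toLeft_union]
  have hFR : F'.toRight = M := by simp [hF'def, toRight_union]
  have hF' : F' ∈ IndComplex (H ⊕g K) := mem_ind_sum.2 ⟨hFL ▸ hF, hFR ▸ hM⟩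
  have hbig := h F' hF' ⟨G2.map embl, (map_inl_mem_link hF' G2).2 (hFL ▸ hG2), by simpa using hcard⟩
  have hno : ∀ b : β, ({inr b} : Finset (α ⊕ β)) ∉ linkC (IndComplex (H ⊕g K)) F' := by
    intro b hb
    have hb' := (singleton_inr_mem_link hF' b).1 hb
    rw [hFR] at hb'
    have hbM : b ∉ M := by
      intro hbM
      exact (Finset.disjoint_left.1 hb'.1) (Finset.mem_singleton_self b) hbM
    exact hMmax b hbM (by
      have := hb'.2
      rwa [← Finset.insert_eq] at this)
  intro u hu w hw
  have hu' : ({inl u} : Finset (α ⊕ β)) ∈ linkC (IndComplex (H ⊕g K)) F' :=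
    (singleton_inl_mem_link hF' u).2 (hFL ▸ hu)
  have hw' : ({inl w} : Finset (α ⊕ β)) ∈ linkC (IndComplex (H ⊕g K)) F' :=
    (singleton_inl_mem_link hF' w).2 (hFL ▸ hw)
  have hpath := hbig (inl u) hu' (inl w) hw'
  exact descend_left hno (fun S hS T hT => linkSub hS hT)
    (fun x y hxy => hFL ▸ (pair_inl_mem_link hF' x y).1 hxy) hpath w rfl

private lemma S2_of_sum_right {H : SimpleGraph α} {K : SimpleGraph β} [Fintype α]
    (h : GraphS2 (H ⊕g K)) : GraphS2 K := by
  obtain ⟨M, hM, hMmax⟩ := exists_maximal_ind H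
  rintro F hF ⟨G2, hG2, hcard⟩
  set F' : Finset (α ⊕ β) := M.map embl ∪ F.map embr with hF'def
  have hFL : F'.toLeft = M := by simp [hF'def, toLeft_union]
  have hFR : F'.toRight = F := by simp [hF'def, toRight_union]
  have hF' : F' ∈ IndComplex (H ⊕g K) := mem_ind_sum.2 ⟨hFL ▸ hM, hFR ▸ hF⟩
  have hbig := h F' hF' ⟨G2.map embr, (map_inr_mem_link hF' G2).2 (hFR ▸ hG2), by simpa using hcard⟩
  have hno : ∀ b : α, ({inl b} : Finset (α ⊕ β)) ∉ linkC (IndComplex (H ⊕g K)) F' := by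
    intro b hb
    have hb' := (singleton_inl_mem_link hF' b).1 hb
    rw [hFL] at hb'
    have hbM : b ∉ M := by
      intro hbM
      exact (Finset.disjoint_left.1 hb'.1) (Finset.mem_singleton_self b) hbM
    exact hMmax b hbM (by
      have := hb'.2
      rwa [← Finset.insert_eq] at this)
  intro u hu w hw
  have hu' : ({inr u} : Finset (α ⊕ β)) ∈ linkC (IndComplex (H ⊕g K)) F' :=
    (singleton_inr_mem_link hF' u).2 (hFR ▸ hu)
  have hw' : ({inr w} : Finset (α ⊕ β)) ∈ linkC (IndComplex (H ⊕g K)) F' :=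
    (singleton_inr_mem_link hF' w).2 (hFR ▸ hw)
  have hpath := hbig (inr u) hu' (inr w) hw'
  exact descend_right hno (fun S hS T hT => linkSub hS hT)
    (fun x y hxy => hFR ▸ (pair_inr_mem_link hF' x y).1 hxy) hpath w rfl

private lemma sum_S2_of_S2 {H : SimpleGraph α} {K : SimpleGraph β}
    (hH : GraphS2 H) (hK : GraphS2 K) : GraphS2 (H ⊕g K) := by
  rintro F hF ⟨G, hG, hGcard⟩
  set Δ := linkC (IndComplex (H ⊕g K)) F with hΔdef
  intro u hu w hw
  by_cases hA : ∃ a : α, ({inl a} : Finset (α ⊕ β)) ∈ Δ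
  · by_cases hB : ∃ b : β, ({inr b} : Finset (α ⊕ β)) ∈ Δ
    · -- both sides have vertices: route via the other side
      obtain ⟨a, ha⟩ := hA
      obtain ⟨b, hb⟩ := hB
      cases u with
      | inl x =>
        cases w with
        | inl y =>
          refine Relation.ReflTransGen.head ⟨by simp, mixed_edge hF hu hb⟩
            (Relation.ReflTransGen.single ⟨by simp, ?_⟩)
          rw [Finset.pair_comm]
          exact mixed_edge hF hw hb
        | inr y => exact Relation.ReflTransGen.single ⟨by simp, mixed_edge hF hu hw⟩
      | inr x =>
        cases w with
        | inl y =>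
          refine Relation.ReflTransGen.single ⟨by simp, ?_⟩
          rw [Finset.pair_comm]
          exact mixed_edge hF hw hu
        | inr y =>
          refine Relation.ReflTransGen.head ⟨by simp, ?_⟩
            (Relation.ReflTransGen.single ⟨by simp, mixed_edge hF ha hw⟩)
          rw [Finset.pair_comm]
          exact mixed_edge hF ha hu
    · -- no right vertices: everything lives on the left
      have hGR : G.toRight = ∅ := by
        ext b
        simp only [Finset.notMem_empty, iff_false, mem_toRight]
        intro hbG
        exact hB ⟨b, linkSub hG (by simp [hbG])⟩
      have hGmap : G = G.toLeft.map embl := eq_map_toLeft hGR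
      have hGL : G.toLeft ∈ linkC (IndComplex H) F.toLeft :=
        (map_inl_mem_link hF G.toLeft).1 (hGmap ▸ hG)
      have hcardL : 2 ≤ G.toLeft.card := by
        have := card_toLeft_add_card_toRight (u := G)
        rw [hGR] at this
        simp at this
        omega
      have hconn := hH F.toLeft (mem_ind_sum.1 hF).1 ⟨G.toLeft, hGL, hcardL⟩
      cases u with
      | inr x => exact absurd (show ∃ b : β, ({inr b} : Finset (α ⊕ β)) ∈ Δ from ⟨x, hu⟩) hB
      | inl x =>
        cases w with
        | inr y => exact absurd (show ∃ b : β, ({inr b} : Finset (α ⊕ β)) ∈ Δ from ⟨y, hw⟩) hB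
        | inl y =>
          have hx := (singleton_inl_mem_link hF x).1 hu
          have hy := (singleton_inl_mem_link hF y).1 hw
          have hpath := hconn x hx y hy
          refine Relation.ReflTransGen.lift inl (fun a b hab => ⟨?_, ?_⟩) _ _ hpath
          · simpa using hab.1
          · exact (pair_inl_mem_link hF a b).2 hab.2
  · -- no left vertices: everything lives on the right
    have hGL : G.toLeft = ∅ := by
      ext b
      simp only [Finset.notMem_empty, iff_false, mem_toLeft]
      intro hbG
      exact hA ⟨b, linkSub hG (by simp [hbG])⟩
    have hGmap : G = G.toRight.map embr := eq_map_toRight hGL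
    have hGR : G.toRight ∈ linkC (IndComplex K) F.toRight :=
      (map_inr_mem_link hF G.toRight).1 (hGmap ▸ hG)
    have hcardR : 2 ≤ G.toRight.card := by
      have := card_toLeft_add_card_toRight (u := G)
      rw [hGL] at this
      simp at this
      omega
    have hconn := hK F.toRight (mem_ind_sum.1 hF).2 ⟨G.toRight, hGR, hcardR⟩
    cases u with
    | inl x => exact absurd (show ∃ a : α, ({inl a} : Finset (α ⊕ β)) ∈ Δ from ⟨x, hu⟩) hA
    | inr x =>
      cases w with
      | inl y => exact absurd (show ∃ a : α, ({inl a} : Finset (α ⊕ β)) ∈ Δ from ⟨y, hw⟩) hA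
      | inr y =>
        have hx := (singleton_inr_mem_link hF x).1 hu
        have hy := (singleton_inr_mem_link hF y).1 hw
        have hpath := hconn x hx y hy
        refine Relation.ReflTransGen.lift inr (fun a b hab => ⟨?_, ?_⟩) _ _ hpath
        · simpa using hab.1
        · exact (pair_inr_mem_link hF a b).2 hab.2

end DisjUnionAux

/-- The disjoint union of two graphs `H` and `K` is `S₂` iff both `H` and `K` are `S₂`. -/
theorem disjUnion_S2_iff {α β : Type*} [DecidableEq α] [DecidableEq β]
    [Fintype α] [Fintype β] (H : SimpleGraph α) (K : SimpleGraph β) :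
    GraphS2 (H ⊕g K) ↔ GraphS2 H ∧ GraphS2 K := by
  constructor
  · intro h
    exact ⟨S2_of_sum_left h, S2_of_sum_right h⟩
  · rintro ⟨hH, hK⟩
    exact sum_S2_of_S2 hH hK
end

section
/- For every integer t ≥ 1, the circulant graphs C_{8t}(t, 4t), C_{10t}(2t, 5t), and C_{10t}(4t, 5t) all satisfy Serre's condition S_2. -/
/-! ### auxiliary link vertex predicate and link lemmas -/

def LinkV {V : Type*} (G : SimpleGraph V) (F : Finset V) (v : V) : Prop :=
  v ∉ F ∧ ∀ x ∈ F, ¬ G.Adj v x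

section LinkLemmas
variable {V : Type*} [DecidableEq V] {G : SimpleGraph V} {F : Finset V}

lemma ind_down_s18 {A B : Finset V} (hA : A ∈ IndComplex G) (h : B ⊆ A) : B ∈ IndComplex G :=
  fun u hu v hv => hA u (h hu) v (h hv)

lemma indep_insert {v : V} (hF : F ∈ IndComplex G) (h2 : ∀ x ∈ F, ¬ G.Adj v x) :
    {v} ∪ F ∈ IndComplex G := by
  intro a ha b hb
  rcases Finset.mem_union.mp ha with ha | ha <;>
    rcases Finset.mem_union.mp hb with hb | hb
  · rw [Finset.mem_singleton.mp ha, Finset.mem_singleton.mp hb]; exact G.irrefl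
  · rw [Finset.mem_singleton.mp ha]; exact h2 b hb
  · rw [Finset.mem_singleton.mp hb]; exact fun h => h2 a ha h.symm
  · exact hF a ha b hb

lemma singleton_mem_link (hF : F ∈ IndComplex G) {v : V} :
    ({v} : Finset V) ∈ linkC (IndComplex G) F ↔ LinkV G F v := by
  constructor
  · rintro ⟨hd, hi⟩
    refine ⟨Finset.disjoint_singleton_left.mp hd, fun x hx => ?_⟩
    exact hi v (Finset.mem_union_left _ (Finset.mem_singleton_self v)) x
      (Finset.mem_union_right _ hx)
  · rintro ⟨hv, h2⟩
    exact ⟨Finset.disjoint_singleton_left.mpr hv, indep_insert hF h2⟩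

lemma pair_mem_link (hF : F ∈ IndComplex G) {u w : V} (hu : LinkV G F u) (hw : LinkV G F w)
    (hne : u ≠ w) (hnadj : ¬ G.Adj u w) : ({u, w} : Finset V) ∈ linkC (IndComplex G) F := by
  constructor
  · rw [Finset.disjoint_left]
    intro a ha
    rcases Finset.mem_insert.mp ha with rfl | ha
    · exact hu.1
    · rw [Finset.mem_singleton.mp ha]; exact hw.1
  · have h1 : ({u, w} : Finset V) ∪ F = {u} ∪ ({w} ∪ F) := by
      rw [Finset.insert_eq, Finset.union_assoc]
    rw [h1]
    refine indep_insert (indep_insert hF hw.2) ?_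
    intro x hx
    rcases Finset.mem_union.mp hx with hx | hx
    · rw [Finset.mem_singleton.mp hx]; exact hnadj
    · exact hu.2 x hx

lemma link_down {A B : Finset V} (hA : A ∈ linkC (IndComplex G) F) (h : B ⊆ A) :
    B ∈ linkC (IndComplex G) F :=
  ⟨hA.1.mono_left h, ind_down_s18 hA.2 (Finset.union_subset_union_left h)⟩

lemma link_two {G₂ : Finset V} (hG₂ : G₂ ∈ linkC (IndComplex G) F) (hc : 2 ≤ G₂.card) :
    ∃ u w, u ≠ w ∧ LinkV G F u ∧ LinkV G F w ∧ ¬ G.Adj u w := by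
  have hF : F ∈ IndComplex G := ind_down_s18 hG₂.2 Finset.subset_union_right
  obtain ⟨u, hu, w, hw, hne⟩ := Finset.one_lt_card.mp hc
  refine ⟨u, w, hne, ?_, ?_, ?_⟩
  · exact (singleton_mem_link hF).mp (link_down hG₂ (Finset.singleton_subset_iff.mpr hu))
  · exact (singleton_mem_link hF).mp (link_down hG₂ (Finset.singleton_subset_iff.mpr hw))
  · exact hG₂.2 u (Finset.mem_union_left _ hu) w (Finset.mem_union_left _ hw)

end LinkLemmas

/-! ### decidable certification -/

def lvP {V : Type} [DecidableEq V] (adj : V → V → Bool) (F : Finset V) (v : V) : Prop :=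
  v ∉ F ∧ ∀ x ∈ F, adj v x = false

noncomputable instance {V : Type} [DecidableEq V] (adj : V → V → Bool) (F : Finset V) (v : V) :
    Decidable (lvP adj F v) := by unfold lvP; infer_instance

def reachP {V : Type} (r : V → V → Prop) : ℕ → V → V → Prop
  | 0, u, w => u = w
  | n+1, u, w => u = w ∨ ∃ z, r u z ∧ reachP r n z w

noncomputable instance reachPDec {V : Type} [DecidableEq V] [Fintype V] (r : V → V → Prop)
    [DecidableRel r] : ∀ (n : ℕ) (u w : V), Decidable (reachP r n u w)
  | 0, u, w => decidable_of_iff (u = w) (by rfl)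
  | n+1, u, w =>
    have : ∀ z, Decidable (r u z ∧ reachP r n z w) :=
      fun z => @instDecidableAnd _ _ _ (reachPDec r n z w)
    @instDecidableOr _ _ _ (@Fintype.decidableExistsFintype _ _ this _)

def coreS2 {V : Type} [DecidableEq V] [Fintype V] (adj : V → V → Bool) (d : ℕ)
    (F : Finset V) : Prop :=
  (∀ u ∈ F, ∀ v ∈ F, adj u v = false) →
    (∃ u, ∃ w, lvP adj F u ∧ lvP adj F w ∧ u ≠ w ∧ adj u w = false) →
    ∀ u, lvP adj F u → ∀ w, lvP adj F w →
      reachP (fun a b => adj a b = false ∧ a ≠ b ∧ lvP adj F b) d u w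

noncomputable instance coreS2Dec {V : Type} [DecidableEq V] [Fintype V] (adj : V → V → Bool)
    (d : ℕ) (F : Finset V) : Decidable (coreS2 adj d F) := by unfold coreS2; infer_instance

section Certify
variable {V : Type} [DecidableEq V] [Fintype V] {G : SimpleGraph V}

lemma lvP_iff_LinkV {adj : V → V → Bool} (hadj : ∀ a b, adj a b = true ↔ G.Adj a b)
    {F : Finset V} {v : V} : lvP adj F v ↔ LinkV G F v := by
  unfold lvP LinkV
  refine and_congr Iff.rfl (forall₂_congr fun x hx => ?_)
  rw [← hadj]
  constructor
  · intro h h'; rw [h'] at h; cases h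
  · intro h; revert h; cases adj v x <;> simp

lemma certify (adj : V → V → Bool) (hadj : ∀ a b, adj a b = true ↔ G.Adj a b) (d : ℕ)
    (h : ∀ F : Finset V, coreS2 adj d F) : GraphS2 G := by
  intro F hF hex u hu w hw
  -- boolean independence of F
  have hFb : ∀ u ∈ F, ∀ v ∈ F, adj u v = false := by
    intro a ha b hb
    have := hF a ha b hb
    rw [← hadj] at this
    revert this; cases adj a b <;> simp
  -- guard
  obtain ⟨G₂, hG₂, hc⟩ := hex
  obtain ⟨p, q, hpq, hp, hq, hnadj⟩ := link_two hG₂ hc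
  have hguard : ∃ p, ∃ q, lvP adj F p ∧ lvP adj F q ∧ p ≠ q ∧ adj p q = false := by
    refine ⟨p, q, (lvP_iff_LinkV hadj).mpr hp, (lvP_iff_LinkV hadj).mpr hq, hpq, ?_⟩
    rw [← hadj] at hnadj; revert hnadj; cases adj p q <;> simp
  have hu' : lvP adj F u := (lvP_iff_LinkV hadj).mpr ((singleton_mem_link hF).mp hu)
  have hw' : lvP adj F w := (lvP_iff_LinkV hadj).mpr ((singleton_mem_link hF).mp hw)
  have key : ∀ (n : ℕ) (a : V), lvP adj F a →
      reachP (fun a b => adj a b = false ∧ a ≠ b ∧ lvP adj F b) n a w →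
      Relation.ReflTransGen
        (fun a b => a ≠ b ∧ ({a, b} : Finset V) ∈ linkC (IndComplex G) F) a w := by
    intro n
    induction n with
    | zero => intro a _ hr; rw [show a = w from hr]
    | succ n ih =>
      intro a ha hr
      rcases hr with rfl | ⟨z, ⟨hzf, hzne, hzlv⟩, hr⟩
      · exact Relation.ReflTransGen.refl
      · refine Relation.ReflTransGen.head ⟨hzne, ?_⟩ (ih z hzlv hr)
        refine pair_mem_link hF ((lvP_iff_LinkV hadj).mp ha) ((lvP_iff_LinkV hadj).mp hzlv)
          hzne ?_
        rw [← hadj, hzf]; simp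
  exact key d u hu' (h F hFb hguard u hu' w hw')

end Certify

/-! ### base graphs -/

instance decMemPair (a b : ℕ) : DecidablePred (· ∈ ({a, b} : Set ℕ)) := fun d =>
  decidable_of_iff (d = a ∨ d = b) (by simp [Set.mem_insert_iff])

instance circulantDecAdj (n : ℕ) (S : Set ℕ) [DecidablePred (· ∈ S)] :
    DecidableRel (circulantGraph n S).Adj := fun a b =>
  decidable_of_iff (a ≠ b ∧ ((a - b).val ∈ S ∨ (b - a).val ∈ S)) Iff.rfl

def adjB8 (a b : ZMod 8) : Bool := a - b = 1 || b - a = 1 || a - b = 4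
def adjB10a (a b : ZMod 10) : Bool := a - b = 2 || b - a = 2 || a - b = 5
def adjB10b (a b : ZMod 10) : Bool := a - b = 4 || b - a = 4 || a - b = 5

def bset {V : Type} [DecidableEq V] (b : Bool) (v : V) : Finset V := cond b {v} ∅

noncomputable instance dForallBool (p : Bool → Prop) [DecidablePred p] : Decidable (∀ b, p b) :=
  decidable_of_iff (p false ∧ p true)
    ⟨fun h b => by cases b; exacts [h.1, h.2], fun h => ⟨h false, h true⟩⟩

def check8 (adj : ZMod 8 → ZMod 8 → Bool) (d : ℕ) : Prop :=
  ∀ b0 b1 b2 b3 b4 b5 b6 b7 : Bool,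
    coreS2 adj d (bset b0 0 ∪ bset b1 1 ∪ bset b2 2 ∪ bset b3 3 ∪ bset b4 4 ∪
      bset b5 5 ∪ bset b6 6 ∪ bset b7 7)

def check10 (adj : ZMod 10 → ZMod 10 → Bool) (d : ℕ) : Prop :=
  ∀ b0 b1 b2 b3 b4 b5 b6 b7 b8 b9 : Bool,
    coreS2 adj d (bset b0 0 ∪ bset b1 1 ∪ bset b2 2 ∪ bset b3 3 ∪ bset b4 4 ∪
      bset b5 5 ∪ bset b6 6 ∪ bset b7 7 ∪ bset b8 8 ∪ bset b9 9)

noncomputable instance (adj : ZMod 8 → ZMod 8 → Bool) (d : ℕ) : Decidable (check8 adj d) := by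
  unfold check8; infer_instance

noncomputable instance (adj : ZMod 10 → ZMod 10 → Bool) (d : ℕ) : Decidable (check10 adj d) := by
  unfold check10; infer_instance

lemma mem_bset {V : Type} [DecidableEq V] {b : Bool} {x v : V} :
    v ∈ bset b x ↔ b = true ∧ v = x := by cases b <;> simp [bset]

lemma cover8 (F : Finset (ZMod 8)) :
    bset (decide ((0:ZMod 8) ∈ F)) 0 ∪ bset (decide ((1:ZMod 8) ∈ F)) 1 ∪
    bset (decide ((2:ZMod 8) ∈ F)) 2 ∪ bset (decide ((3:ZMod 8) ∈ F)) 3 ∪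
    bset (decide ((4:ZMod 8) ∈ F)) 4 ∪ bset (decide ((5:ZMod 8) ∈ F)) 5 ∪
    bset (decide ((6:ZMod 8) ∈ F)) 6 ∪ bset (decide ((7:ZMod 8) ∈ F)) 7 = F := by
  ext v
  constructor
  · intro hv
    simp only [Finset.mem_union, mem_bset] at hv
    rcases hv with ((((((h|h)|h)|h)|h)|h)|h)|h <;>
      { rcases h with ⟨hd, rfl⟩; exact of_decide_eq_true hd }
  · intro hv
    have hb : v ∈ bset (decide (v ∈ F)) v := mem_bset.mpr ⟨decide_eq_true hv, rfl⟩
    revert hb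
    rcases (by decide : ∀ x : ZMod 8, x = 0 ∨ x = 1 ∨ x = 2 ∨ x = 3 ∨ x = 4 ∨ x = 5 ∨ x = 6 ∨ x = 7) v with
      rfl|rfl|rfl|rfl|rfl|rfl|rfl|rfl <;> intro hb <;> simp only [Finset.mem_union] <;> tauto

lemma cover10 (F : Finset (ZMod 10)) :
    bset (decide ((0:ZMod 10) ∈ F)) 0 ∪ bset (decide ((1:ZMod 10) ∈ F)) 1 ∪
    bset (decide ((2:ZMod 10) ∈ F)) 2 ∪ bset (decide ((3:ZMod 10) ∈ F)) 3 ∪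
    bset (decide ((4:ZMod 10) ∈ F)) 4 ∪ bset (decide ((5:ZMod 10) ∈ F)) 5 ∪
    bset (decide ((6:ZMod 10) ∈ F)) 6 ∪ bset (decide ((7:ZMod 10) ∈ F)) 7 ∪
    bset (decide ((8:ZMod 10) ∈ F)) 8 ∪ bset (decide ((9:ZMod 10) ∈ F)) 9 = F := by
  ext v
  constructor
  · intro hv
    simp only [Finset.mem_union, mem_bset] at hv
    rcases hv with ((((((((h|h)|h)|h)|h)|h)|h)|h)|h)|h <;>
      { rcases h with ⟨hd, rfl⟩; exact of_decide_eq_true hd }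
  · intro hv
    have hb : v ∈ bset (decide (v ∈ F)) v := mem_bset.mpr ⟨decide_eq_true hv, rfl⟩
    revert hb
    rcases (by decide : ∀ x : ZMod 10, x = 0 ∨ x = 1 ∨ x = 2 ∨ x = 3 ∨ x = 4 ∨ x = 5 ∨ x = 6 ∨ x = 7 ∨ x = 8 ∨
      x = 9) v with
      rfl|rfl|rfl|rfl|rfl|rfl|rfl|rfl|rfl|rfl <;> intro hb <;> simp only [Finset.mem_union] <;> tauto

lemma check8_all {adj : ZMod 8 → ZMod 8 → Bool} {d : ℕ} (h : check8 adj d)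
    (F : Finset (ZMod 8)) : coreS2 adj d F := by
  have := h (decide ((0:ZMod 8) ∈ F)) (decide ((1:ZMod 8) ∈ F)) (decide ((2:ZMod 8) ∈ F))
    (decide ((3:ZMod 8) ∈ F)) (decide ((4:ZMod 8) ∈ F)) (decide ((5:ZMod 8) ∈ F))
    (decide ((6:ZMod 8) ∈ F)) (decide ((7:ZMod 8) ∈ F))
  rwa [cover8] at this

lemma check10_all {adj : ZMod 10 → ZMod 10 → Bool} {d : ℕ} (h : check10 adj d)
    (F : Finset (ZMod 10)) : coreS2 adj d F := by
  have := h (decide ((0:ZMod 10) ∈ F)) (decide ((1:ZMod 10) ∈ F)) (decide ((2:ZMod 10) ∈ F))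
    (decide ((3:ZMod 10) ∈ F)) (decide ((4:ZMod 10) ∈ F)) (decide ((5:ZMod 10) ∈ F))
    (decide ((6:ZMod 10) ∈ F)) (decide ((7:ZMod 10) ∈ F)) (decide ((8:ZMod 10) ∈ F))
    (decide ((9:ZMod 10) ∈ F))
  rwa [cover10] at this

lemma adjB8_iff : ∀ a b, adjB8 a b = true ↔ (circulantGraph 8 {1, 4}).Adj a b := by decide

lemma adjB10a_iff : ∀ a b, adjB10a a b = true ↔ (circulantGraph 10 {2, 5}).Adj a b := by decide

lemma adjB10b_iff : ∀ a b, adjB10b a b = true ↔ (circulantGraph 10 {4, 5}).Adj a b := by decide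

set_option maxHeartbeats 16000000 in
set_option maxRecDepth 8000 in
lemma base8 : GraphS2 (circulantGraph 8 {1, 4}) :=
  certify adjB8 adjB8_iff 3 (check8_all (by decide))

set_option maxHeartbeats 64000000 in
set_option maxRecDepth 8000 in
lemma base10a : GraphS2 (circulantGraph 10 {2, 5}) :=
  certify adjB10a adjB10a_iff 3 (check10_all (by decide))

set_option maxHeartbeats 64000000 in
set_option maxRecDepth 8000 in
lemma base10b : GraphS2 (circulantGraph 10 {4, 5}) :=
  certify adjB10b adjB10b_iff 3 (check10_all (by decide))

/-! ### disjoint sums of graphs -/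

def sumGraph (ι : Type) {W : Type} (H : SimpleGraph W) : SimpleGraph (ι × W) where
  Adj p q := p.1 = q.1 ∧ H.Adj p.2 q.2
  symm := ⟨fun p q h => ⟨h.1.symm, h.2.symm⟩⟩
  loopless := ⟨fun p h => H.irrefl h.2⟩

section SumLemma
variable {ι W : Type} [DecidableEq ι] [DecidableEq W] {H : SimpleGraph W}

lemma sum_S2 (hH : GraphS2 H) : GraphS2 (sumGraph ι H) := by
  intro F hF hex u hu w hw
  obtain ⟨G₂, hG₂, hc⟩ := hex
  obtain ⟨p, q, hpq, hp, hq, hnadj⟩ := link_two hG₂ hc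
  have hu' : LinkV (sumGraph ι H) F u := (singleton_mem_link hF).mp hu
  have hw' : LinkV (sumGraph ι H) F w := (singleton_mem_link hF).mp hw
  by_cases hall : ∀ v, LinkV (sumGraph ι H) F v → v.1 = u.1
  · -- all link vertices in the class of u
    set i := u.1 with hi
    -- the trace of F on class i
    set Fi : Finset W := (F.filter (fun x => x.1 = i)).image Prod.snd with hFi
    have memFi : ∀ y : W, y ∈ Fi ↔ (i, y) ∈ F := by
      intro y
      simp only [hFi, Finset.mem_image, Finset.mem_filter]
      constructor
      · rintro ⟨x, ⟨hxF, hx1⟩, hx2⟩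
        rwa [show (i, y) = x from Prod.ext hx1.symm hx2.symm]
      · intro h; exact ⟨(i, y), ⟨h, rfl⟩, rfl⟩
    have hFiInd : Fi ∈ IndComplex H := by
      intro a ha b hb hab
      exact hF _ ((memFi a).mp ha) _ ((memFi b).mp hb) ⟨rfl, hab⟩
    have hLV : ∀ y : W, LinkV H Fi y ↔ LinkV (sumGraph ι H) F (i, y) := by
      intro y
      constructor
      · rintro ⟨hy1, hy2⟩
        refine ⟨fun h => hy1 ((memFi y).mpr h), fun x hx hadj => ?_⟩
        obtain ⟨h1, h2⟩ := hadj
        apply hy2 x.2 _ h2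
        rw [memFi]
        rwa [show (i, x.2) = x from Prod.ext h1 rfl]
      · rintro ⟨hy1, hy2⟩
        refine ⟨fun h => hy1 ((memFi y).mp h), fun x hx hadj => ?_⟩
        exact hy2 (i, x) ((memFi x).mp hx) ⟨rfl, hadj⟩
    -- p, q are in class i
    have hp1 : p.1 = i := hall p hp
    have hq1 : q.1 = i := hall q hq
    have hp' : LinkV H Fi p.2 := by
      rw [hLV]; rwa [show (i, p.2) = p from Prod.ext hp1.symm rfl]
    have hq' : LinkV H Fi q.2 := by
      rw [hLV]; rwa [show (i, q.2) = q from Prod.ext hq1.symm rfl]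
    have hpq2 : p.2 ≠ q.2 := by
      intro h; exact hpq (Prod.ext (hp1.trans hq1.symm) h)
    have hnadj2 : ¬ H.Adj p.2 q.2 := by
      intro h; exact hnadj ⟨hp1.trans hq1.symm, h⟩
    have hcc := hH Fi hFiInd ⟨{p.2, q.2}, pair_mem_link hFiInd hp' hq' hpq2 hnadj2,
      by rw [Finset.card_insert_of_notMem (by simpa using hpq2), Finset.card_singleton]⟩
    have hw1 : w.1 = i := hall w hw'
    have hu2 : ({u.2} : Finset W) ∈ linkC (IndComplex H) Fi := by
      rw [singleton_mem_link hFiInd, hLV]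
      rwa [show (i, u.2) = u from Prod.ext rfl rfl]
    have hw2 : ({w.2} : Finset W) ∈ linkC (IndComplex H) Fi := by
      rw [singleton_mem_link hFiInd, hLV]
      rwa [show (i, w.2) = w from Prod.ext hw1.symm rfl]
    have hpath := hcc u.2 hu2 w.2 hw2
    have hstep : ∀ a b : W,
        (a ≠ b ∧ ({a, b} : Finset W) ∈ linkC (IndComplex H) Fi) →
        (((i, a) : ι × W) ≠ (i, b) ∧ ({(i, a), (i, b)} : Finset (ι × W)) ∈
          linkC (IndComplex (sumGraph ι H)) F) := by
      intro a b hab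
      obtain ⟨hab1, hab2⟩ := hab
      have ha : LinkV H Fi a := (singleton_mem_link hFiInd).mp
        (link_down hab2 (by intro x hx; rw [Finset.mem_singleton.mp hx]; simp))
      have hb : LinkV H Fi b := (singleton_mem_link hFiInd).mp
        (link_down hab2 (by intro x hx; rw [Finset.mem_singleton.mp hx]; simp))
      have hnadjab : ¬ H.Adj a b := hab2.2 a
        (Finset.mem_union_left _ (by simp)) b (Finset.mem_union_left _ (by simp))
      refine ⟨fun h => hab1 (congrArg Prod.snd h), ?_⟩
      exact pair_mem_link hF ((hLV a).mp ha) ((hLV b).mp hb)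
        (fun h => hab1 (congrArg Prod.snd h)) (fun h => hnadjab h.2)
    have hlift := Relation.ReflTransGen.lift
      (p := fun x y : ι × W => x ≠ y ∧ ({x, y} : Finset (ι × W)) ∈
        linkC (IndComplex (sumGraph ι H)) F)
      (fun a : W => ((i, a) : ι × W)) hstep _ _ hpath
    unfold Function.onFun at hlift
    beta_reduce at hlift
    rw [show ((i, w.2) : ι × W) = w from Prod.ext hw1.symm rfl] at hlift
    exact hlift
  · -- there is a link vertex outside the class of u
    push_neg at hall
    obtain ⟨z, hz, hz1⟩ := hall
    by_cases huw : u = w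
    · rw [huw]
    have step : ∀ a b : ι × W, LinkV (sumGraph ι H) F a → LinkV (sumGraph ι H) F b →
        a.1 ≠ b.1 → Relation.ReflTransGen
          (fun a b => a ≠ b ∧ ({a, b} : Finset (ι × W)) ∈ linkC (IndComplex (sumGraph ι H)) F)
          a b := by
      intro a b ha hb hne
      have hne' : a ≠ b := fun h => hne (congrArg Prod.fst h)
      exact Relation.ReflTransGen.single
        ⟨hne', pair_mem_link hF ha hb hne' (fun h => hne h.1)⟩
    by_cases h1 : u.1 = w.1
    · -- go through z
      exact (step u z hu' hz (fun h => hz1 h.symm)).trans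
        (step z w hz hw' (fun h => hz1 (h.trans h1.symm)))
    · exact step u w hu' hw' h1

end SumLemma

/-! ### transport of S2 along a graph isomorphism -/

section Transport
variable {V V' : Type} [DecidableEq V] [DecidableEq V'] {G : SimpleGraph V}
  {G' : SimpleGraph V'}

lemma transport_S2 (e : V ≃ V') (he : ∀ a b, G'.Adj (e a) (e b) ↔ G.Adj a b)
    (h : GraphS2 G) : GraphS2 G' := by
  intro F' hF' hex u' hu' w' hw'
  have hΦΨ : ∀ A : Finset V', (A.map e.symm.toEmbedding).map e.toEmbedding = A := by
    intro A; ext x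
    simp only [Finset.mem_map, Equiv.coe_toEmbedding]
    constructor
    · rintro ⟨y, ⟨z, hz, rfl⟩, rfl⟩; simpa using hz
    · intro hx; exact ⟨e.symm x, ⟨x, hx, rfl⟩, e.apply_symm_apply x⟩
  have hInd : ∀ A : Finset V, A ∈ IndComplex G ↔ A.map e.toEmbedding ∈ IndComplex G' := by
    intro A
    constructor
    · intro hA u hu v hv
      simp only [Finset.mem_map, Equiv.coe_toEmbedding] at hu hv
      obtain ⟨a, ha, rfl⟩ := hu
      obtain ⟨b, hb, rfl⟩ := hv
      rw [he]; exact hA a ha b hb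
    · intro hA u hu v hv hadj
      exact hA (e u) (Finset.mem_map_of_mem _ hu) (e v) (Finset.mem_map_of_mem _ hv)
        ((he u v).mpr hadj)
  have hlink : ∀ A : Finset V,
      A ∈ linkC (IndComplex G) (F'.map e.symm.toEmbedding) ↔
        A.map e.toEmbedding ∈ linkC (IndComplex G') F' := by
    intro A
    constructor
    · rintro ⟨hd, hi⟩
      constructor
      · rw [← hΦΨ F']; exact (Finset.disjoint_map _).mpr hd
      · rw [← hΦΨ F', ← Finset.map_union]; exact (hInd _).mp hi
    · rintro ⟨hd, hi⟩
      constructor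
      · rw [← hΦΨ F'] at hd; exact (Finset.disjoint_map _).mp hd
      · rw [hInd, Finset.map_union, hΦΨ]; exact hi
  have hF : F'.map e.symm.toEmbedding ∈ IndComplex G := by
    rw [hInd, hΦΨ]; exact hF'
  obtain ⟨G₂', hG₂', hc⟩ := hex
  have hex' : ∃ B ∈ linkC (IndComplex G) (F'.map e.symm.toEmbedding), 2 ≤ B.card := by
    refine ⟨G₂'.map e.symm.toEmbedding, ?_, by rwa [Finset.card_map]⟩
    rw [hlink, hΦΨ]; exact hG₂'
  have hu : ({e.symm u'} : Finset V) ∈ linkC (IndComplex G) (F'.map e.symm.toEmbedding) := by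
    rw [hlink, show ({e.symm u'} : Finset V).map e.toEmbedding = {u'} by
      rw [Finset.map_singleton]; simp]
    exact hu'
  have hw : ({e.symm w'} : Finset V) ∈ linkC (IndComplex G) (F'.map e.symm.toEmbedding) := by
    rw [hlink, show ({e.symm w'} : Finset V).map e.toEmbedding = {w'} by
      rw [Finset.map_singleton]; simp]
    exact hw'
  have hpath := h _ hF hex' (e.symm u') hu (e.symm w') hw
  have hstep : ∀ a b : V,
      (a ≠ b ∧ ({a, b} : Finset V) ∈ linkC (IndComplex G) (F'.map e.symm.toEmbedding)) →
      (e a ≠ e b ∧ ({e a, e b} : Finset V') ∈ linkC (IndComplex G') F') := by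
    intro a b ⟨h1, h2⟩
    refine ⟨e.injective.ne h1, ?_⟩
    have : ({a, b} : Finset V).map e.toEmbedding = {e a, e b} := by
      rw [Finset.map_insert, Finset.map_singleton]; simp
    rw [← this]
    exact (hlink _).mp h2
  have hlift := Relation.ReflTransGen.lift
    (p := fun x y : V' => x ≠ y ∧ ({x, y} : Finset V') ∈ linkC (IndComplex G') F')
    (fun a : V => e a) hstep _ _ hpath
  unfold Function.onFun at hlift
  beta_reduce at hlift
  rwa [e.apply_symm_apply, e.apply_symm_apply] at hlift

end Transport

/-! ### the splitting equivalence -/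

def zsplit (N t : ℕ) (p : Fin t × ZMod N) : ZMod (N * t) :=
  ((p.1.val + t * p.2.val : ℕ) : ZMod (N * t))

section Split
variable {N t : ℕ} [NeZero N] [NeZero t]

lemma zsplit_bound (p : Fin t × ZMod N) : p.1.val + t * p.2.val < N * t :=
  calc p.1.val + t * p.2.val < t + t * p.2.val := Nat.add_lt_add_right p.1.isLt _
    _ = t * (p.2.val + 1) := by ring
    _ ≤ t * N := Nat.mul_le_mul_left _ (ZMod.val_lt p.2)
    _ = N * t := mul_comm t N

instance instNeZeroMul : NeZero (N * t) :=
  ⟨Nat.mul_ne_zero (NeZero.ne N) (NeZero.ne t)⟩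

lemma zsplit_inj : Function.Injective (zsplit N t) := by
  intro p q h
  have h' := congrArg ZMod.val h
  unfold zsplit at h'
  rw [ZMod.val_cast_of_lt (zsplit_bound p), ZMod.val_cast_of_lt (zsplit_bound q)] at h'
  have h1 : p.1.val % t = q.1.val % t := by
    have := congrArg (· % t) h'
    simpa only [Nat.add_mul_mod_self_left] using this
  rw [Nat.mod_eq_of_lt p.1.isLt, Nat.mod_eq_of_lt q.1.isLt] at h1
  have h2 : p.2.val = q.2.val := by
    have ht : t ≠ 0 := NeZero.ne t
    have : t * p.2.val = t * q.2.val := by omega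
    exact Nat.eq_of_mul_eq_mul_left (Nat.pos_of_ne_zero ht) this
  exact Prod.ext (Fin.ext h1) (ZMod.val_injective N h2)

lemma zsplit_bij : Function.Bijective (zsplit N t) := by
  rw [Fintype.bijective_iff_injective_and_card]
  refine ⟨zsplit_inj, ?_⟩
  rw [Fintype.card_prod, ZMod.card, ZMod.card, Fintype.card_fin, mul_comm]

lemma zsplit_sub_eq {c : ℕ} (hc : c < N) (p q : Fin t × ZMod N) :
    zsplit N t p - zsplit N t q = ((t * c : ℕ) : ZMod (N * t)) ↔
      p.1 = q.1 ∧ p.2 - q.2 = (c : ZMod N) := by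
  have ht : t ≠ 0 := NeZero.ne t
  have hsub : (p.2 - q.2 = (c : ZMod N)) ↔ p.2.val ≡ c + q.2.val [MOD N] := by
    rw [sub_eq_iff_eq_add]
    have e1 : ((p.2.val : ℕ) : ZMod N) = p.2 := ZMod.natCast_rightInverse p.2
    have e2 : ((c + q.2.val : ℕ) : ZMod N) = (c : ZMod N) + q.2 := by
      rw [Nat.cast_add, ZMod.natCast_rightInverse q.2]
    conv_lhs => rw [← e1, ← e2]
    exact ZMod.natCast_eq_natCast_iff _ _ _
  rw [hsub, sub_eq_iff_eq_add]
  unfold zsplit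
  rw [← Nat.cast_add, ZMod.natCast_eq_natCast_iff]
  constructor
  · intro h
    have h1 : p.1.val % t = q.1.val % t := by
      have hmt := h.of_dvd (dvd_mul_left t N)
      unfold Nat.ModEq at hmt
      rwa [Nat.add_mul_mod_self_left,
        show t * c + (q.1.val + t * q.2.val) = q.1.val + t * (c + q.2.val) by ring,
        Nat.add_mul_mod_self_left] at hmt
    rw [Nat.mod_eq_of_lt p.1.isLt, Nat.mod_eq_of_lt q.1.isLt] at h1
    refine ⟨Fin.ext h1, ?_⟩
    rw [h1] at h
    have hh : q.1.val + t * p.2.val ≡ q.1.val + t * (c + q.2.val) [MOD N * t] := by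
      rw [show q.1.val + t * (c + q.2.val) = t * c + (q.1.val + t * q.2.val) by ring]
      exact h
    have h2 := Nat.ModEq.add_left_cancel' q.1.val hh
    rw [mul_comm N t] at h2
    exact Nat.ModEq.mul_left_cancel' ht h2
  · rintro ⟨h1, h2⟩
    have h1v : p.1.val = q.1.val := congrArg Fin.val h1
    have h2' := Nat.ModEq.mul_left' t h2
    have h3 := Nat.ModEq.add_left p.1.val h2'
    rw [mul_comm t N] at h3
    rwa [show t * c + (q.1.val + t * q.2.val) = q.1.val + t * (c + q.2.val) by ring, ← h1v]

end Split

/-! ### family adjacency correspondence -/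

lemma val_eq_iff {n : ℕ} [NeZero n] (x : ZMod n) {m : ℕ} (h : m < n) :
    x.val = m ↔ x = (m : ZMod n) := by
  constructor
  · intro hv; rw [← hv, ZMod.natCast_rightInverse x]
  · intro he; rw [he, ZMod.val_cast_of_lt h]

lemma sub_eq_cast_ne {n : ℕ} [NeZero n] {x y : ZMod n} {c : ℕ} (h0 : 0 < c) (h1 : c < n)
    (h : x - y = (c : ZMod n)) : x ≠ y := by
  intro he
  rw [he, sub_self] at h
  have := congrArg ZMod.val h
  rw [ZMod.val_zero, ZMod.val_cast_of_lt h1] at this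
  omega

lemma circulant_adj (n : ℕ) (S : Set ℕ) (a b : ZMod n) :
    (circulantGraph n S).Adj a b ↔ (a ≠ b ∧ ((a - b).val ∈ S ∨ (b - a).val ∈ S)) := Iff.rfl

lemma sum_adj (ι : Type) {W : Type} (H : SimpleGraph W) (p q : ι × W) :
    (sumGraph ι H).Adj p q ↔ (p.1 = q.1 ∧ H.Adj p.2 q.2) := Iff.rfl

lemma family_iff (N t c₁ c₂ : ℕ) [NeZero N] [NeZero t] (hc₁ : 0 < c₁) (hc₁N : c₁ < N)
    (hc₂ : 0 < c₂) (hc₂N : c₂ < N) (p q : Fin t × ZMod N) :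
    (circulantGraph (N * t) {t * c₁, t * c₂}).Adj (zsplit N t p) (zsplit N t q) ↔
      (sumGraph (Fin t) (circulantGraph N {c₁, c₂})).Adj p q := by
  have htpos : 0 < t := Nat.pos_of_ne_zero (NeZero.ne t)
  have hb1 : t * c₁ < N * t := ((mul_lt_mul_iff_right₀ htpos).mpr hc₁N).trans_eq (mul_comm t N)
  have hb2 : t * c₂ < N * t := ((mul_lt_mul_iff_right₀ htpos).mpr hc₂N).trans_eq (mul_comm t N)
  rw [circulant_adj, sum_adj, circulant_adj]
  simp only [Set.mem_insert_iff, Set.mem_singleton_iff]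
  rw [val_eq_iff _ hb1, val_eq_iff _ hb2, zsplit_sub_eq hc₁N, zsplit_sub_eq hc₂N]
  conv_lhs => rw [val_eq_iff _ hb1, val_eq_iff _ hb2, zsplit_sub_eq hc₁N, zsplit_sub_eq hc₂N]
  rw [val_eq_iff _ hc₁N, val_eq_iff _ hc₂N, val_eq_iff _ hc₁N, val_eq_iff _ hc₂N]
  rw [zsplit_inj.ne_iff]
  constructor
  · rintro ⟨hpq, (⟨h1, h2⟩ | ⟨h1, h2⟩) | (⟨h1, h2⟩ | ⟨h1, h2⟩)⟩
    · exact ⟨h1, sub_eq_cast_ne hc₁ hc₁N h2, Or.inl (Or.inl h2)⟩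
    · exact ⟨h1, sub_eq_cast_ne hc₂ hc₂N h2, Or.inl (Or.inr h2)⟩
    · exact ⟨h1.symm, (sub_eq_cast_ne hc₁ hc₁N h2).symm, Or.inr (Or.inl h2)⟩
    · exact ⟨h1.symm, (sub_eq_cast_ne hc₂ hc₂N h2).symm, Or.inr (Or.inr h2)⟩
  · rintro ⟨h1, h2, (h3 | h3) | (h3 | h3)⟩
    · exact ⟨fun h => h2 (congrArg Prod.snd h), Or.inl (Or.inl ⟨h1, h3⟩)⟩
    · exact ⟨fun h => h2 (congrArg Prod.snd h), Or.inl (Or.inr ⟨h1, h3⟩)⟩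
    · exact ⟨fun h => h2 (congrArg Prod.snd h), Or.inr (Or.inl ⟨h1.symm, h3⟩)⟩
    · exact ⟨fun h => h2 (congrArg Prod.snd h), Or.inr (Or.inr ⟨h1.symm, h3⟩)⟩


/-- For every `t ≥ 1`, the circulant graphs `C_{8t}(t, 4t)`, `C_{10t}(2t, 5t)` and
`C_{10t}(4t, 5t)` are all `S₂`. -/
theorem circulant_families_S2 (t : ℕ) (ht : 1 ≤ t) :
    GraphS2 (circulantGraph (8 * t) {t, 4 * t}) ∧
    GraphS2 (circulantGraph (10 * t) {2 * t, 5 * t}) ∧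
    GraphS2 (circulantGraph (10 * t) {4 * t, 5 * t}) := by
  haveI : NeZero t := ⟨by omega⟩
  refine ⟨?_, ?_, ?_⟩
  · rw [show ({t, 4 * t} : Set ℕ) = {t * 1, t * 4} by rw [mul_one, mul_comm t 4]]
    exact transport_S2 (Equiv.ofBijective _ (zsplit_bij (N := 8) (t := t)))
      (fun p q => family_iff 8 t 1 4 one_pos (by norm_num) (by norm_num) (by norm_num) p q)
      (sum_S2 base8)
  · rw [show ({2 * t, 5 * t} : Set ℕ) = {t * 2, t * 5} by rw [mul_comm t 2, mul_comm t 5]]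
    exact transport_S2 (Equiv.ofBijective _ (zsplit_bij (N := 10) (t := t)))
      (fun p q => family_iff 10 t 2 5 (by norm_num) (by norm_num) (by norm_num) (by norm_num)
        p q)
      (sum_S2 base10a)
  · rw [show ({4 * t, 5 * t} : Set ℕ) = {t * 4, t * 5} by rw [mul_comm t 4, mul_comm t 5]]
    exact transport_S2 (Equiv.ofBijective _ (zsplit_bij (N := 10) (t := t)))
      (fun p q => family_iff 10 t 4 5 (by norm_num) (by norm_num) (by norm_num) (by norm_num)
        p q)
      (sum_S2 base10b)
end

section
/- Let d ≥ 1 and n = 4d+3, and let G = C_n(1,2,...,d). Then the facets of Ind(G) containing the vertex 0 are exactly the sets {0, x, y} with d+1 ≤ x ≤ 2d+1 and x+d+1 ≤ y ≤ 3d+2; consequently link_{Ind(G)}(0) is connected and Ind(G) satisfies Serre's condition S_2 (i.e., G is S_2). -/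
section helpers
variable {d n : ℕ}

private lemma sub_val_cast [NeZero n] {s t : ℕ} (hs : s < n) (ht : t < n) :
    ((s : ZMod n) - t).val = if t ≤ s then s - t else n - (t - s) := by
  split_ifs with h
  · have e : ((s : ZMod n) - t) = ((s - t : ℕ) : ZMod n) := by
      have : (s - t) + t = s := by omega
      calc ((s : ZMod n) - t) = ((s - t + t : ℕ) : ZMod n) - t := by rw [this]
        _ = ((s - t : ℕ) : ZMod n) := by push_cast; ring
    rw [e, ZMod.val_cast_of_lt (by omega)]
  · have e : ((s : ZMod n) - t) = ((n - (t - s) : ℕ) : ZMod n) := by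
      have h2 : (n - (t - s)) + t = n + s := by omega
      have h3 := congrArg (Nat.cast : ℕ → ZMod n) h2
      push_cast at h3
      rw [ZMod.natCast_self] at h3
      rw [sub_eq_iff_eq_add]
      linear_combination h3.symm
    rw [e, ZMod.val_cast_of_lt (by omega)]

private lemma val_sub_eq [NeZero n] (i j : ZMod n) :
    (i - j).val = if j.val ≤ i.val then i.val - j.val else n - (j.val - i.val) := by
  conv_lhs => rw [← ZMod.natCast_zmod_val i, ← ZMod.natCast_zmod_val j]
  exact sub_val_cast (ZMod.val_lt i) (ZMod.val_lt j)

private lemma notAdj_iff (hn : n = 4 * d + 3) (i j : ZMod n) :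
    ¬ (circulantGraph n (Set.Icc 1 d)).Adj i j ↔
      i = j ∨ (d + 1 ≤ (i - j).val ∧ (i - j).val ≤ 3 * d + 2) := by
  haveI : NeZero n := ⟨by omega⟩
  by_cases hij : i = j
  · simp [hij, circulantGraph]
  · have h0 : (i - j) ≠ 0 := sub_ne_zero.mpr hij
    have hv0 : (i - j).val ≠ 0 := fun h => h0 ((ZMod.val_eq_zero _).mp h)
    have hneg : (j - i).val = n - (i - j).val := by
      rw [show j - i = -(i - j) by ring, ZMod.neg_val]
      simp [h0]
    have hlt := ZMod.val_lt (i - j)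
    show ¬(i ≠ j ∧ _) ↔ _
    simp only [Set.mem_Icc, ne_eq, hij, not_false_iff, true_and, hneg, false_or]
    omega
private lemma val_ne_of_ne [NeZero n] {i j : ZMod n} (h : i ≠ j) : i.val ≠ j.val :=
  fun e => h (ZMod.val_injective n e)

private lemma notAdj_of_val (hn : n = 4 * d + 3) {i j : ZMod n}
    (h1 : d + 1 ≤ (i - j).val) (h2 : (i - j).val ≤ 3 * d + 2) :
    ¬ (circulantGraph n (Set.Icc 1 d)).Adj i j :=
  (notAdj_iff hn i j).mpr (Or.inr ⟨h1, h2⟩)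

private lemma notAdj_symm {V : Type*} {G : SimpleGraph V} {i j : V}
    (h : ¬ G.Adj i j) : ¬ G.Adj j i := fun a => h a.symm

private lemma gp_of_notAdj (hn : n = 4 * d + 3) {i j : ZMod n} (hij : i ≠ j)
    (h : ¬ (circulantGraph n (Set.Icc 1 d)).Adj i j) :
    d + 1 ≤ (i.val - j.val) + (j.val - i.val) ∧
      (i.val - j.val) + (j.val - i.val) ≤ 3 * d + 2 := by
  haveI : NeZero n := ⟨by omega⟩
  rcases (notAdj_iff hn i j).mp h with h' | h'
  · exact absurd h' hij
  · have hv := val_sub_eq i j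
    have h1 := ZMod.val_lt i
    have h2 := ZMod.val_lt j
    have hne := val_ne_of_ne hij
    split_ifs at hv <;> omega

private lemma notAdj_of_gp (hn : n = 4 * d + 3) {i j : ZMod n}
    (h1 : d + 1 ≤ (i.val - j.val) + (j.val - i.val))
    (h2 : (i.val - j.val) + (j.val - i.val) ≤ 3 * d + 2) :
    ¬ (circulantGraph n (Set.Icc 1 d)).Adj i j := by
  haveI : NeZero n := ⟨by omega⟩
  have hv := val_sub_eq i j
  have l1 := ZMod.val_lt i
  have l2 := ZMod.val_lt j
  apply notAdj_of_val hn (i := i) (j := j) <;> (split_ifs at hv <;> omega)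

private lemma no_four (hn : n = 4 * d + 3) {a b c e : ZMod n}
    (hab : a ≠ b) (hac : a ≠ c) (hae : a ≠ e) (hbc : b ≠ c) (hbe : b ≠ e) (hce : c ≠ e)
    (nab : ¬ (circulantGraph n (Set.Icc 1 d)).Adj a b)
    (nac : ¬ (circulantGraph n (Set.Icc 1 d)).Adj a c)
    (nae : ¬ (circulantGraph n (Set.Icc 1 d)).Adj a e)
    (nbc : ¬ (circulantGraph n (Set.Icc 1 d)).Adj b c)
    (nbe : ¬ (circulantGraph n (Set.Icc 1 d)).Adj b e)
    (nce : ¬ (circulantGraph n (Set.Icc 1 d)).Adj c e) : False := by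
  haveI : NeZero n := ⟨by omega⟩
  have g1 := gp_of_notAdj hn hab nab
  have g2 := gp_of_notAdj hn hac nac
  have g3 := gp_of_notAdj hn hae nae
  have g4 := gp_of_notAdj hn hbc nbc
  have g5 := gp_of_notAdj hn hbe nbe
  have g6 := gp_of_notAdj hn hce nce
  have l1 := ZMod.val_lt a
  have l2 := ZMod.val_lt b
  have l3 := ZMod.val_lt c
  have l4 := ZMod.val_lt e
  omega
private lemma triple_indep (hn : n = 4 * d + 3) {p q r : ZMod n}
    (hpq : ¬ (circulantGraph n (Set.Icc 1 d)).Adj p q)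
    (hpr : ¬ (circulantGraph n (Set.Icc 1 d)).Adj p r)
    (hqr : ¬ (circulantGraph n (Set.Icc 1 d)).Adj q r) :
    ({p, q, r} : Finset (ZMod n)) ∈ IndComplex (circulantGraph n (Set.Icc 1 d)) := by
  intro u hu v hv
  simp only [Finset.mem_insert, Finset.mem_singleton] at hu hv
  rcases hu with rfl | rfl | rfl <;> rcases hv with rfl | rfl | rfl <;>
    first
      | exact (circulantGraph n (Set.Icc 1 d)).loopless.irrefl _
      | assumption
      | exact notAdj_symm hpq
      | exact notAdj_symm hpr
      | exact notAdj_symm hqr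

private lemma pair_indep {p q : ZMod n}
    (hpq : ¬ (circulantGraph n (Set.Icc 1 d)).Adj p q) :
    ({p, q} : Finset (ZMod n)) ∈ IndComplex (circulantGraph n (Set.Icc 1 d)) := by
  intro u hu v hv
  simp only [Finset.mem_insert, Finset.mem_singleton] at hu hv
  rcases hu with rfl | rfl <;> rcases hv with rfl | rfl <;>
    first
      | exact (circulantGraph n (Set.Icc 1 d)).loopless.irrefl _
      | assumption
      | exact notAdj_symm hpq
private lemma link_edge (hn : n = 4 * d + 3) (a : ZMod n) {s t : ℕ}
    (hs1 : d + 1 ≤ s) (hs2 : s ≤ 3 * d + 2) (ht1 : d + 1 ≤ t) (ht2 : t ≤ 3 * d + 2)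
    (hst1 : d + 1 ≤ (s - t) + (t - s)) (hst2 : (s - t) + (t - s) ≤ 3 * d + 2) :
    (a + (s : ZMod n)) ≠ (a + (t : ZMod n)) ∧
      ({a + (s : ZMod n), a + (t : ZMod n)} : Finset (ZMod n)) ∈
        linkC (IndComplex (circulantGraph n (Set.Icc 1 d))) {a} := by
  haveI : NeZero n := ⟨by omega⟩
  have hsn : s < n := by omega
  have htn : t < n := by omega
  have hvs : ((s : ZMod n)).val = s := ZMod.val_cast_of_lt hsn
  have hvt : ((t : ZMod n)).val = t := ZMod.val_cast_of_lt htn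
  have e1 : (a + (s : ZMod n)) - a = (s : ZMod n) := by ring
  have e2 : (a + (t : ZMod n)) - a = (t : ZMod n) := by ring
  have e3 : (a + (s : ZMod n)) - (a + (t : ZMod n)) = (s : ZMod n) - t := by ring
  have hvst := sub_val_cast (n := n) hsn htn
  have hne : (a + (s : ZMod n)) ≠ (a + (t : ZMod n)) := by
    intro h
    have h0 : ((s : ZMod n) - t).val = 0 := by
      rw [← e3, h]; simp
    rw [hvst] at h0
    split_ifs at h0 <;> omega
  have castnz : ∀ k : ℕ, d + 1 ≤ k → k < n → (k : ZMod n) ≠ 0 := by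
    intro k h1 h2 h
    have h3 := congrArg ZMod.val h
    rw [ZMod.val_cast_of_lt h2, ZMod.val_zero] at h3
    omega
  have hsa : a ≠ a + (s : ZMod n) := fun h => castnz s hs1 hsn (left_eq_add.mp h)
  have hta : a ≠ a + (t : ZMod n) := fun h => castnz t ht1 htn (left_eq_add.mp h)
  refine ⟨hne, ?_, ?_⟩
  · simp only [Finset.disjoint_singleton_right, Finset.mem_insert, Finset.mem_singleton]
    push_neg
    exact ⟨hsa, hta⟩
  · have hun : ({a + (s : ZMod n), a + (t : ZMod n)} : Finset (ZMod n)) ∪ {a} =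
        {a + (s : ZMod n), a + (t : ZMod n), a} := by
      ext z; simp [or_assoc]
    rw [hun]
    refine triple_indep hn ?_ ?_ ?_
    · apply notAdj_of_val hn (i := a + (s : ZMod n)) (j := a + (t : ZMod n)) <;>
        rw [e3, hvst] <;> split_ifs <;> omega
    · apply notAdj_of_val hn (i := a + (s : ZMod n)) (j := a) <;>
        rw [e1, hvs] <;> omega
    · apply notAdj_of_val hn (i := a + (t : ZMod n)) (j := a) <;>
        rw [e2, hvt] <;> omega
private lemma link_singleton_connected (hn : n = 4 * d + 3) (hd : 1 ≤ d) (a : ZMod n) :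
    ComplexConnected (linkC (IndComplex (circulantGraph n (Set.Icc 1 d))) {a}) := by
  haveI : NeZero n := ⟨by omega⟩
  set Gc := circulantGraph n (Set.Icc 1 d) with hGc
  set Δ := IndComplex Gc with hΔ
  have Rsymm : ∀ u w : ZMod n,
      (u ≠ w ∧ ({u, w} : Finset (ZMod n)) ∈ linkC Δ {a}) →
      (w ≠ u ∧ ({w, u} : Finset (ZMod n)) ∈ linkC Δ {a}) := by
    intro u w h
    obtain ⟨h1, h2⟩ := h
    exact ⟨h1.symm, by rwa [Finset.pair_comm]⟩
  have coord : ∀ u : ZMod n, ({u} : Finset (ZMod n)) ∈ linkC Δ {a} →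
      ∃ s : ℕ, u = a + (s : ZMod n) ∧ d + 1 ≤ s ∧ s ≤ 3 * d + 2 := by
    intro u hu
    obtain ⟨hdis, hmem⟩ := hu
    have hua : u ≠ a := (by simpa using hdis)
    have hnadj : ¬ Gc.Adj u a := hmem u (by simp) a (by simp)
    rcases (notAdj_iff hn u a).mp hnadj with h | h
    · exact absurd h hua
    · refine ⟨(u - a).val, ?_, h.1, h.2⟩
      rw [ZMod.natCast_zmod_val]; ring
  intro u hu w hw
  obtain ⟨s, rfl, hs1, hs2⟩ := coord u hu
  obtain ⟨t, rfl, ht1, ht2⟩ := coord w hw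
  have hPQ := link_edge (s := d + 1) (t := 3 * d + 2) hn a (by omega) (by omega)
    (by omega) (by omega) (by omega) (by omega)
  by_cases hcs : s ≤ 2 * d + 1 <;> by_cases hct : t ≤ 2 * d + 1
  · -- both low: via Q = 3d+2
    have h1 := link_edge (s := s) (t := 3 * d + 2) hn a hs1 hs2 (by omega) (by omega)
      (by omega) (by omega)
    have h2 := link_edge (s := t) (t := 3 * d + 2) hn a ht1 ht2 (by omega) (by omega)
      (by omega) (by omega)
    refine Relation.ReflTransGen.trans (b := a + ((3 * d + 2 : ℕ) : ZMod n))
      (Relation.ReflTransGen.single ?_) (Relation.ReflTransGen.single ?_)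
    · exact h1
    · exact Rsymm _ _ h2
  · -- s low, t high: u - Q - P - w
    have h1 := link_edge (s := s) (t := 3 * d + 2) hn a hs1 hs2 (by omega) (by omega)
      (by omega) (by omega)
    have h2 := link_edge (s := t) (t := d + 1) hn a ht1 ht2 (by omega) (by omega)
      (by omega) (by omega)
    refine Relation.ReflTransGen.trans (b := a + ((3 * d + 2 : ℕ) : ZMod n))
      (Relation.ReflTransGen.single ?_)
      (Relation.ReflTransGen.trans (b := a + ((d + 1 : ℕ) : ZMod n))
        (Relation.ReflTransGen.single ?_) (Relation.ReflTransGen.single ?_))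
    · exact h1
    · exact Rsymm _ _ hPQ
    · exact Rsymm _ _ h2
  · -- s high, t low
    have h1 := link_edge (s := s) (t := d + 1) hn a hs1 hs2 (by omega) (by omega)
      (by omega) (by omega)
    have h2 := link_edge (s := t) (t := 3 * d + 2) hn a ht1 ht2 (by omega) (by omega)
      (by omega) (by omega)
    refine Relation.ReflTransGen.trans (b := a + ((d + 1 : ℕ) : ZMod n))
      (Relation.ReflTransGen.single ?_)
      (Relation.ReflTransGen.trans (b := a + ((3 * d + 2 : ℕ) : ZMod n))
        (Relation.ReflTransGen.single ?_) (Relation.ReflTransGen.single ?_))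
    · exact h1
    · exact hPQ
    · exact Rsymm _ _ h2
  · -- both high: via P = d+1
    have h1 := link_edge (s := s) (t := d + 1) hn a hs1 hs2 (by omega) (by omega)
      (by omega) (by omega)
    have h2 := link_edge (s := t) (t := d + 1) hn a ht1 ht2 (by omega) (by omega)
      (by omega) (by omega)
    refine Relation.ReflTransGen.trans (b := a + ((d + 1 : ℕ) : ZMod n))
      (Relation.ReflTransGen.single ?_) (Relation.ReflTransGen.single ?_)
    · exact h1
    · exact Rsymm _ _ h2
private lemma link_empty {V : Type*} [DecidableEq V] (Δ : Set (Finset V)) :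
    linkC Δ (∅ : Finset V) = Δ := by
  ext F; simp [linkC]

private lemma ind_connected (hn : n = 4 * d + 3) (hd : 1 ≤ d) :
    ComplexConnected (IndComplex (circulantGraph n (Set.Icc 1 d))) := by
  haveI : NeZero n := ⟨by omega⟩
  set Gc := circulantGraph n (Set.Icc 1 d) with hGc
  have hc0 : ((d + 1 : ℕ) : ZMod n) ≠ 0 := by
    intro h
    have h3 := congrArg ZMod.val h
    rw [ZMod.val_cast_of_lt (by omega), ZMod.val_zero] at h3
    omega
  have step : ∀ v : ZMod n,
      v ≠ v + ((d + 1 : ℕ) : ZMod n) ∧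
        ({v, v + ((d + 1 : ℕ) : ZMod n)} : Finset (ZMod n)) ∈ IndComplex Gc := by
    intro v
    refine ⟨fun h => hc0 (left_eq_add.mp h), ?_⟩
    refine pair_indep ?_
    apply notAdj_of_val hn (i := v) (j := v + ((d + 1 : ℕ) : ZMod n)) <;>
    · have e : v - (v + ((d + 1 : ℕ) : ZMod n)) = -((d + 1 : ℕ) : ZMod n) := by ring
      rw [e, ZMod.neg_val]
      simp only [hc0, if_false]
      rw [ZMod.val_cast_of_lt (by omega : d + 1 < n)]
      omega
  have reach : ∀ (k : ℕ) (v : ZMod n),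
      Relation.ReflTransGen
        (fun a b : ZMod n => a ≠ b ∧ ({a, b} : Finset (ZMod n)) ∈ IndComplex Gc)
        v (v + ((k * (d + 1) : ℕ) : ZMod n)) := by
    intro k
    induction k with
    | zero => intro v; simpa using Relation.ReflTransGen.refl
    | succ m ih =>
      intro v
      have e : v + (((m + 1) * (d + 1) : ℕ) : ZMod n) =
          (v + ((m * (d + 1) : ℕ) : ZMod n)) + ((d + 1 : ℕ) : ZMod n) := by
        push_cast; ring
      rw [e]
      exact (ih v).tail (step _)
  intro u _ w _
  have key : u + ((4 * (w - u).val * (d + 1) : ℕ) : ZMod n) = w := by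
    have h4 : (4 : ZMod n) * ((d + 1 : ℕ) : ZMod n) = 1 := by
      have h5 : ((4 * (d + 1) : ℕ) : ZMod n) = ((n : ℕ) : ZMod n) + 1 := by
        rw [hn]; push_cast; ring
      rw [ZMod.natCast_self] at h5
      push_cast at h5 ⊢
      linear_combination h5
    have e : ((4 * (w - u).val * (d + 1) : ℕ) : ZMod n) =
        (((w - u).val : ℕ) : ZMod n) * ((4 : ZMod n) * ((d + 1 : ℕ) : ZMod n)) := by
      push_cast; ring
    rw [e, h4, mul_one, ZMod.natCast_zmod_val]
    ring
  have := reach (4 * (w - u).val) u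
  rwa [key] at this
private lemma triple_facet (hn : n = 4 * d + 3) {x y : ℕ}
    (hx1 : d + 1 ≤ x) (hx2 : x ≤ 2 * d + 1) (hy1 : x + d + 1 ≤ y) (hy2 : y ≤ 3 * d + 2) :
    ({0, (x : ZMod n), (y : ZMod n)} : Finset (ZMod n)) ∈
      facetsOf (IndComplex (circulantGraph n (Set.Icc 1 d))) := by
  haveI : NeZero n := ⟨by omega⟩
  have hvx : ((x : ZMod n)).val = x := ZMod.val_cast_of_lt (by omega)
  have hvy : ((y : ZMod n)).val = y := ZMod.val_cast_of_lt (by omega)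
  have hv0 : ((0 : ZMod n)).val = 0 := ZMod.val_zero
  have n0x : ¬ (circulantGraph n (Set.Icc 1 d)).Adj 0 (x : ZMod n) := by
    apply notAdj_of_gp hn <;> rw [hvx, hv0] <;> omega
  have n0y : ¬ (circulantGraph n (Set.Icc 1 d)).Adj 0 (y : ZMod n) := by
    apply notAdj_of_gp hn <;> rw [hvy, hv0] <;> omega
  have nxy : ¬ (circulantGraph n (Set.Icc 1 d)).Adj (x : ZMod n) (y : ZMod n) := by
    apply notAdj_of_gp hn <;> rw [hvx, hvy] <;> omega
  refine ⟨triple_indep hn n0x n0y nxy, ?_⟩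
  intro K hK hsub
  refine Finset.Subset.antisymm hsub ?_
  intro k hk
  have nk0 := hK k hk 0 (hsub (by simp))
  have nkx := hK k hk (x : ZMod n) (hsub (by simp))
  have nky := hK k hk (y : ZMod n) (hsub (by simp))
  by_contra hc
  simp only [Finset.mem_insert, Finset.mem_singleton] at hc
  push_neg at hc
  obtain ⟨hk0, hkx, hky⟩ := hc
  have g1 := gp_of_notAdj hn hk0 nk0
  have g2 := gp_of_notAdj hn hkx nkx
  have g3 := gp_of_notAdj hn hky nky
  have lk := ZMod.val_lt k
  rw [hv0] at g1
  rw [hvx] at g2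
  rw [hvy] at g3
  omega

private lemma facet_zero_struct (hn : n = 4 * d + 3) (hd : 1 ≤ d) {H : Finset (ZMod n)}
    (hH : H ∈ facetsOf (IndComplex (circulantGraph n (Set.Icc 1 d))))
    (h0 : (0 : ZMod n) ∈ H) :
    ∃ x y : ℕ, d + 1 ≤ x ∧ x ≤ 2 * d + 1 ∧ x + d + 1 ≤ y ∧ y ≤ 3 * d + 2 ∧
      H = {0, (x : ZMod n), (y : ZMod n)} := by
  haveI : NeZero n := ⟨by omega⟩
  obtain ⟨hind, hmax⟩ := hH
  have hv0 : ((0 : ZMod n)).val = 0 := ZMod.val_zero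
  -- card ≤ 3
  have hcard3 : H.card ≤ 3 := by
    by_contra hc
    push_neg at hc
    have h3 : 3 ≤ (H.erase 0).card := by
      have := Finset.card_erase_of_mem h0; omega
    obtain ⟨t, hts, htc⟩ := Finset.exists_subset_card_eq h3
    obtain ⟨aa, bb, cc, h1, h2, h3', rfl⟩ := Finset.card_eq_three.mp htc
    obtain ⟨na, ma⟩ := Finset.mem_erase.mp
      (hts (show aa ∈ ({aa, bb, cc} : Finset (ZMod n)) by simp))
    obtain ⟨nb, mb⟩ := Finset.mem_erase.mp
      (hts (show bb ∈ ({aa, bb, cc} : Finset (ZMod n)) by simp))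
    obtain ⟨nc, mc⟩ := Finset.mem_erase.mp
      (hts (show cc ∈ ({aa, bb, cc} : Finset (ZMod n)) by simp))
    exact no_four hn (Ne.symm na) (Ne.symm nb) (Ne.symm nc) h1 h2 h3'
      (hind 0 h0 aa ma) (hind 0 h0 bb mb) (hind 0 h0 cc mc)
      (hind aa ma bb mb) (hind aa ma cc mc) (hind bb mb cc mc)
  -- card ≥ 3
  have hcard_ge : 3 ≤ H.card := by
    by_contra hc
    push_neg at hc
    have h1 : 1 ≤ H.card := Finset.card_pos.mpr ⟨0, h0⟩
    have : H.card = 1 ∨ H.card = 2 := by omega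
    rcases this with h | h
    · obtain ⟨a, rfl⟩ := Finset.card_eq_one.mp h
      have ha0 : a = 0 := by have := h0; rw [Finset.mem_singleton] at this; exact this.symm
      subst ha0
      have hKmem := triple_facet (x := d + 1) (y := 2 * d + 2) hn
        (by omega) (by omega) (by omega) (by omega)
      have hsub : ({0} : Finset (ZMod n)) ⊆ {0, ((d + 1 : ℕ) : ZMod n), ((2 * d + 2 : ℕ) : ZMod n)} := by
        intro z hz; simp at hz; simp [hz]
      have heq := hmax _ hKmem.1 hsub
      have : ((d + 1 : ℕ) : ZMod n) ∈ ({0} : Finset (ZMod n)) := by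
        rw [heq]; simp
      simp only [Finset.mem_singleton] at this
      have h3 := congrArg ZMod.val this
      rw [ZMod.val_cast_of_lt (by omega), ZMod.val_zero] at h3
      omega
    · obtain ⟨p, q, hpq, hH2⟩ := Finset.card_eq_two.mp h
      have h0' : (0 : ZMod n) = p ∨ (0 : ZMod n) = q := by
        rw [hH2] at h0; simpa using h0
      have hz : ∃ z : ZMod n, z ≠ 0 ∧ H = {0, z} := by
        rcases h0' with rfl | rfl
        · exact ⟨q, Ne.symm hpq, hH2⟩
        · exact ⟨p, hpq, by rw [hH2]; exact Finset.pair_comm p 0⟩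
      obtain ⟨z, hz0, hHz⟩ := hz
      have hzH : z ∈ H := by rw [hHz]; simp
      have nz0 : ¬ (circulantGraph n (Set.Icc 1 d)).Adj z 0 := hind z hzH 0 h0
      have g1 := gp_of_notAdj hn hz0 nz0
      rw [hv0] at g1
      have lz := ZMod.val_lt z
      set w : ℕ := if z.val ≤ 2 * d + 1 then z.val + (d + 1) else d + 1 with hw
      have hwb : d + 1 ≤ w ∧ w ≤ 3 * d + 2 ∧ (d + 1 ≤ (w - z.val) + (z.val - w)) ∧
          ((w - z.val) + (z.val - w) ≤ 3 * d + 2) ∧ w ≠ z.val ∧ w ≠ 0 := by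
        rw [hw]; split_ifs <;> omega
      obtain ⟨hw1, hw2, hw3, hw4, hw5, hw6⟩ := hwb
      clear hw
      have hvw : ((w : ZMod n)).val = w := ZMod.val_cast_of_lt (by omega)
      have nw0 : ¬ (circulantGraph n (Set.Icc 1 d)).Adj ((w : ℕ) : ZMod n) 0 := by
        apply notAdj_of_gp hn <;> rw [hvw, hv0] <;> omega
      have nwz : ¬ (circulantGraph n (Set.Icc 1 d)).Adj ((w : ℕ) : ZMod n) z := by
        apply notAdj_of_gp hn <;> rw [hvw] <;> omega
      have hKmem : ({((w : ℕ) : ZMod n), 0, z} : Finset (ZMod n)) ∈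
          IndComplex (circulantGraph n (Set.Icc 1 d)) :=
        triple_indep hn nw0 nwz (hind 0 h0 z hzH)
      have hsub : H ⊆ {((w : ℕ) : ZMod n), 0, z} := by
        rw [hHz]; intro u hu
        simp only [Finset.mem_insert, Finset.mem_singleton] at hu ⊢
        tauto
      have heq := hmax _ hKmem hsub
      have hwH : ((w : ℕ) : ZMod n) ∈ H := by rw [heq]; simp
      rw [hHz] at hwH
      simp only [Finset.mem_insert, Finset.mem_singleton] at hwH
      rcases hwH with h' | h'
      · have h3 := congrArg ZMod.val h'
        rw [hvw, ZMod.val_zero] at h3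
        omega
      · have h3 := congrArg ZMod.val h'
        rw [hvw] at h3
        omega
  have hc3 : H.card = 3 := le_antisymm hcard3 hcard_ge
  obtain ⟨p, q, r, hpq, hpr, hqr, hHe⟩ := Finset.card_eq_three.mp hc3
  have hab : ∃ a b : ZMod n, a ≠ b ∧ a ≠ 0 ∧ b ≠ 0 ∧ H = {0, a, b} := by
    have h0' : (0 : ZMod n) = p ∨ (0 : ZMod n) = q ∨ (0 : ZMod n) = r := by
      rw [hHe] at h0; simpa using h0
    rcases h0' with rfl | rfl | rfl
    · exact ⟨q, r, hqr, Ne.symm hpq, Ne.symm hpr, hHe⟩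
    · refine ⟨p, r, hpr, hpq, Ne.symm hqr, ?_⟩
      rw [hHe]; ext u; simp only [Finset.mem_insert, Finset.mem_singleton]; tauto
    · refine ⟨p, q, hpq, hpr, hqr, ?_⟩
      rw [hHe]; ext u; simp only [Finset.mem_insert, Finset.mem_singleton]; tauto
  obtain ⟨a, b, hab', ha0, hb0, hHab⟩ := hab
  have haH : a ∈ H := by rw [hHab]; simp
  have hbH : b ∈ H := by rw [hHab]; simp
  have g1 := gp_of_notAdj hn ha0 (hind a haH 0 h0)
  have g2 := gp_of_notAdj hn hb0 (hind b hbH 0 h0)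
  have g3 := gp_of_notAdj hn hab' (hind a haH b hbH)
  rw [hv0] at g1 g2
  have la := ZMod.val_lt a
  have lb := ZMod.val_lt b
  rcases le_total a.val b.val with hle | hle
  · refine ⟨a.val, b.val, by omega, by omega, by omega, by omega, ?_⟩
    rw [ZMod.natCast_zmod_val, ZMod.natCast_zmod_val]
    exact hHab
  · refine ⟨b.val, a.val, by omega, by omega, by omega, by omega, ?_⟩
    rw [ZMod.natCast_zmod_val, ZMod.natCast_zmod_val, hHab]
    ext u; simp only [Finset.mem_insert, Finset.mem_singleton]; tauto

end helpers

/-- For `d ≥ 1` and `n = 4d+3`, in `G = C_n(1,…,d)` the facets of `Ind(G)` containing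
the vertex `0` are exactly the sets `{0, x, y}` with `d+1 ≤ x ≤ 2d+1` and
`x+d+1 ≤ y ≤ 3d+2`; consequently `link_{Ind(G)}(0)` is connected and `G` is `S₂`. -/
theorem circulant_4dp3_link_zero (d : ℕ) (hd : 1 ≤ d) (n : ℕ) (hn : n = 4 * d + 3)
    (G : SimpleGraph (ZMod n)) (hG : G = circulantGraph n (Set.Icc 1 d)) :
    (∀ H : Finset (ZMod n),
      (H ∈ facetsOf (IndComplex G) ∧ (0 : ZMod n) ∈ H) ↔
        ∃ x y : ℕ, d + 1 ≤ x ∧ x ≤ 2 * d + 1 ∧ x + d + 1 ≤ y ∧ y ≤ 3 * d + 2 ∧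
          H = {0, (x : ZMod n), (y : ZMod n)}) ∧
    ComplexConnected (linkC (IndComplex G) {0}) ∧
    GraphS2 G := by
  subst hG
  haveI : NeZero n := ⟨by omega⟩
  refine ⟨?_, ?_, ?_⟩
  · intro H
    constructor
    · rintro ⟨hH, h0⟩
      exact facet_zero_struct hn hd hH h0
    · rintro ⟨x, y, hx1, hx2, hy1, hy2, rfl⟩
      exact ⟨triple_facet hn hx1 hx2 hy1 hy2, by simp⟩
  · exact link_singleton_connected hn hd 0
  · intro F hF hex
    rcases Nat.lt_or_ge F.card 2 with hc | hc
    · have hc01 : F.card = 0 ∨ F.card = 1 := by omega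
      rcases hc01 with h | h
      · rw [Finset.card_eq_zero.mp h, link_empty]
        exact ind_connected hn hd
      · obtain ⟨a, rfl⟩ := Finset.card_eq_one.mp h
        exact link_singleton_connected hn hd a
    · exfalso
      obtain ⟨Gs, ⟨hdis, hun⟩, hGc⟩ := hex
      obtain ⟨a, ha, b, hb, hab⟩ := Finset.one_lt_card.mp hc
      obtain ⟨c, hcm, e, hem, hce⟩ := Finset.one_lt_card.mp hGc
      have maF : a ∈ Gs ∪ F := Finset.mem_union_right _ ha
      have mbF : b ∈ Gs ∪ F := Finset.mem_union_right _ hb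
      have mcF : c ∈ Gs ∪ F := Finset.mem_union_left _ hcm
      have meF : e ∈ Gs ∪ F := Finset.mem_union_left _ hem
      have hca : c ≠ a := fun h => (Finset.disjoint_left.mp hdis hcm) (h ▸ ha)
      have hcb : c ≠ b := fun h => (Finset.disjoint_left.mp hdis hcm) (h ▸ hb)
      have hea : e ≠ a := fun h => (Finset.disjoint_left.mp hdis hem) (h ▸ ha)
      have heb : e ≠ b := fun h => (Finset.disjoint_left.mp hdis hem) (h ▸ hb)
      exact no_four hn hab (Ne.symm hca) (Ne.symm hea) (Ne.symm hcb) (Ne.symm heb) hce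
        (hun a maF b mbF) (hun a maF c mcF) (hun a maF e meF)
        (hun b mbF c mcF) (hun b mbF e meF) (hun c mcF e meF)
end
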